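/- arXiv:1606.05700 — 4 statements merged into one kernel-verified Lean document; each statement's English description precedes it below -/
import Mathlib

section
/- For every integer n ≥ 1, (1/π) · ∫₀^∞ (2(1 − cos s)/s²)ⁿ ds ≤ √(3/(πn)) + 2/((2n−1)·π^{2n}). -/
open MeasureTheory Real Set

lemma nonneg_of_deriv_aux (f f' : ℝ → ℝ) (hder : ∀ x, HasDerivAt f (f' x) x)
    (h0 : 0 ≤ f 0) (hd : ∀ x, 0 ≤ x → 0 ≤ f' x) {x : ℝ} (hx : 0 ≤ x) : 0 ≤ f x := by
  have hm : MonotoneOn f (Ici 0) := by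
    apply monotoneOn_of_deriv_nonneg (convex_Ici 0)
    · exact fun y _ => (hder y).continuousAt.continuousWithinAt
    · exact fun y _ => ((hder y).differentiableAt).differentiableWithinAt
    · intro y hy
      rw [(hder y).deriv]
      exact hd y (le_of_lt (by simpa [interior_Ici] using hy))
  calc (0:ℝ) ≤ f 0 := h0
    _ ≤ f x := hm self_mem_Ici hx hx

lemma hasDerivAt_expneg (t : ℝ) : HasDerivAt (fun t : ℝ => Real.exp (-t)) (-Real.exp (-t)) t := by
  simpa [Function.comp_def] using (Real.hasDerivAt_exp (-t)).comp t (hasDerivAt_neg t)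

lemma exp_neg_le_quad {t : ℝ} (ht : 0 ≤ t) : Real.exp (-t) ≤ 1 - t + t^2/2 := by
  have := nonneg_of_deriv_aux (fun t => 1 - t + t^2/2 - Real.exp (-t))
    (fun t => -1 + t + Real.exp (-t)) (fun t => by
      have h2 : HasDerivAt (fun t : ℝ => 1 - t + t^2/2) (-1 + t) t := by
        have h := (((hasDerivAt_const t (1:ℝ)).sub (hasDerivAt_id' t)).add
          (((hasDerivAt_id' t).pow 2).div_const 2))
        refine HasDerivAt.congr_deriv h ?_
        push_cast; ring
      have := h2.sub (hasDerivAt_expneg t)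
      refine HasDerivAt.congr_deriv this ?_
      ring)
    (by simp) (fun t ht => by nlinarith [Real.add_one_le_exp (-t)]) ht
  simp only [sub_nonneg] at this
  linarith

lemma quad_cubic_le_exp_neg {t : ℝ} (ht : 0 ≤ t) : 1 - t + t^2/2 - t^3/6 ≤ Real.exp (-t) := by
  have := nonneg_of_deriv_aux (fun t => Real.exp (-t) - (1 - t + t^2/2 - t^3/6))
    (fun t => -Real.exp (-t) + 1 - t + t^2/2) (fun t => by
      have h2 : HasDerivAt (fun t : ℝ => 1 - t + t^2/2 - t^3/6) (-1 + t - t^2/2) t := by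
        have h := ((((hasDerivAt_const t (1:ℝ)).sub (hasDerivAt_id' t)).add
          (((hasDerivAt_id' t).pow 2).div_const 2)).sub
          (((hasDerivAt_id' t).pow 3).div_const 6))
        refine HasDerivAt.congr_deriv h ?_
        push_cast; ring
      have := (hasDerivAt_expneg t).sub h2
      refine HasDerivAt.congr_deriv this ?_
      ring)
    (by simp) (fun t ht => by nlinarith [exp_neg_le_quad ht]) ht
  simp only [sub_nonneg] at this
  linarith

lemma sub_cube_le_sin {x : ℝ} (hx : 0 ≤ x) : x - x^3/6 ≤ Real.sin x := by
  have := nonneg_of_deriv_aux (fun x => Real.sin x - (x - x^3/6))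
    (fun x => Real.cos x - (1 - x^2/2)) (fun x => by
      have h2 : HasDerivAt (fun x : ℝ => x - x^3/6) (1 - x^2/2) x := by
        have h := (hasDerivAt_id' x).sub (((hasDerivAt_id' x).pow 3).div_const 6)
        refine HasDerivAt.congr_deriv h ?_
        push_cast; ring
      exact (Real.hasDerivAt_sin x).sub h2)
    (by simp) (fun x hx => by
      nlinarith [Real.one_sub_sq_div_two_le_cos (x := x)]) hx
  linarith

lemma cos_le_quartic {x : ℝ} (hx : 0 ≤ x) : Real.cos x ≤ 1 - x^2/2 + x^4/24 := by
  have := nonneg_of_deriv_aux (fun x => 1 - x^2/2 + x^4/24 - Real.cos x)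
    (fun x => -x + x^3/6 + Real.sin x) (fun x => by
      have h2 : HasDerivAt (fun x : ℝ => 1 - x^2/2 + x^4/24) (-x + x^3/6) x := by
        have h := ((hasDerivAt_const x (1:ℝ)).sub (((hasDerivAt_id' x).pow 2).div_const 2)).add
          (((hasDerivAt_id' x).pow 4).div_const 24)
        refine HasDerivAt.congr_deriv h ?_
        push_cast; ring
      have := h2.sub (Real.hasDerivAt_cos x)
      refine HasDerivAt.congr_deriv this ?_
      ring)
    (by simp) (fun x hx => by nlinarith [sub_cube_le_sin hx]) hx
  linarith

lemma sin_le_quintic {x : ℝ} (hx : 0 ≤ x) : Real.sin x ≤ x - x^3/6 + x^5/120 := by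
  have := nonneg_of_deriv_aux (fun x => x - x^3/6 + x^5/120 - Real.sin x)
    (fun x => 1 - x^2/2 + x^4/24 - Real.cos x) (fun x => by
      have h2 : HasDerivAt (fun x : ℝ => x - x^3/6 + x^5/120) (1 - x^2/2 + x^4/24) x := by
        have h := ((hasDerivAt_id' x).sub (((hasDerivAt_id' x).pow 3).div_const 6)).add
          (((hasDerivAt_id' x).pow 5).div_const 120)
        refine HasDerivAt.congr_deriv h ?_
        push_cast; ring
      exact h2.sub (Real.hasDerivAt_sin x))
    (by simp) (fun x hx => by nlinarith [cos_le_quartic hx]) hx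
  linarith

lemma sin_le_mul_exp {x : ℝ} (hx : 0 ≤ x) (hxp : x ≤ π) :
    Real.sin x ≤ x * Real.exp (-(x^2/6)) := by
  rcases le_or_gt (x^2) 7.2 with h | h
  · have h1 := sin_le_quintic hx
    have h2 := quad_cubic_le_exp_neg (t := x^2/6) (by positivity)
    have h3 : x * (1 - x^2/6 + (x^2/6)^2/2 - (x^2/6)^3/6) ≤ x * Real.exp (-(x^2/6)) :=
      mul_le_mul_of_nonneg_left h2 hx
    nlinarith [pow_nonneg hx 5, pow_nonneg hx 3]
  · have hx' : 2.683 ≤ x := by nlinarith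
    have hpu : π < 3.1416 := by linarith [Real.pi_lt_d6]
    have hpl : 3.1415 < π := by linarith [Real.pi_gt_d6]
    have hu1 : π^2/12 ≤ 0.8225 := by nlinarith
    have hu0 : (0.822 : ℝ) ≤ π^2/12 := by nlinarith
    have hcube := quad_cubic_le_exp_neg (t := π^2/12) (by positivity)
    have hval : (0.42 : ℝ) ≤ 1 - π^2/12 + (π^2/12)^2/2 - (π^2/12)^3/6 := by nlinarith
    have hE : (0.1764 : ℝ) ≤ Real.exp (-(π^2/6)) := by
      have hsq : Real.exp (-(π^2/6)) = Real.exp (-(π^2/12)) ^ 2 := by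
        rw [← Real.exp_nat_mul]
        congr 1
        push_cast
        ring
      rw [hsq]
      nlinarith [hcube, hval]
    have hmono : Real.exp (-(π^2/6)) ≤ Real.exp (-(x^2/6)) := by
      apply Real.exp_le_exp.mpr; nlinarith
    have hsin : Real.sin x ≤ π - x := by
      rw [← Real.sin_pi_sub]; exact Real.sin_le (by linarith)
    have : π - x ≤ x * Real.exp (-(x^2/6)) := by nlinarith
    linarith

lemma f_nonneg {s : ℝ} : 0 ≤ 2*(1 - Real.cos s)/s^2 := by
  apply div_nonneg _ (by positivity)
  nlinarith [Real.cos_le_one s]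

lemma f_le_one {s : ℝ} (hs : s ≠ 0) : 2*(1 - Real.cos s)/s^2 ≤ 1 := by
  have h := Real.one_sub_sq_div_two_le_cos (x := s)
  rw [div_le_one (by positivity)]
  nlinarith

lemma f_le_exp {s : ℝ} (h0 : 0 < s) (h2 : s ≤ 2*π) :
    2*(1 - Real.cos s)/s^2 ≤ Real.exp (-(s^2/12)) := by
  have hx0 : 0 ≤ s/2 := by linarith
  have hxp : s/2 ≤ π := by linarith
  have hs := sin_le_mul_exp hx0 hxp
  have hs0 : 0 ≤ Real.sin (s/2) := Real.sin_nonneg_of_nonneg_of_le_pi hx0 hxp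
  have hE2 : Real.exp (-((s/2)^2/6))^2 = Real.exp (-(s^2/12)) := by
    rw [← Real.exp_nat_mul]; congr 1; push_cast; ring
  have hsq : Real.sin (s/2)^2 ≤ (s/2)^2 * Real.exp (-(s^2/12)) := by
    calc Real.sin (s/2)^2 ≤ (s/2 * Real.exp (-((s/2)^2/6)))^2 := by
          apply pow_le_pow_left₀ hs0 hs
      _ = (s/2)^2 * Real.exp (-(s^2/12)) := by rw [mul_pow, hE2]
  have hcos : Real.cos s = 1 - 2 * Real.sin (s/2)^2 := by
    have h := Real.cos_two_mul (s/2)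
    rw [show 2*(s/2) = s by ring] at h
    rw [h, Real.cos_sq']; ring
  rw [hcos, show 2*(1 - (1 - 2 * Real.sin (s/2)^2))/s^2 = Real.sin (s/2)^2/(s/2)^2 by
    field_simp; ring]
  rw [div_le_iff₀ (by positivity)]
  linarith [hsq]

lemma f_le_inv_sq {s : ℝ} (hs : 0 < s) : 2*(1 - Real.cos s)/s^2 ≤ 4 * (s^2)⁻¹ := by
  rw [div_le_iff₀ (by positivity)]
  have h1 := Real.neg_one_le_cos s
  have h2 : (0:ℝ) < s^2 := by positivity
  field_simp
  nlinarith

/-- For every integer `n ≥ 1`,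
`(1/π) ∫₀^∞ (2(1 − cos s)/s²)ⁿ ds ≤ √(3/(πn)) + 2/((2n−1) π^{2n})`. -/
theorem integral_char_pow_bound (n : ℕ) (hn : 1 ≤ n) :
    (1 / Real.pi) * (∫ s in Set.Ioi (0 : ℝ), (2 * (1 - Real.cos s) / s ^ 2) ^ n) ≤
      Real.sqrt (3 / (Real.pi * n)) + 2 / ((2 * (n : ℝ) - 1) * Real.pi ^ (2 * n)) := by
  have hπ := Real.pi_pos
  set N : ℝ := (n : ℝ) with hN
  have hN1 : 1 ≤ N := by rw [hN]; exact_mod_cast hn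
  set g : ℝ → ℝ := fun s => (2 * (1 - Real.cos s) / s ^ 2) ^ n with hg
  -- continuity
  have hcont : ContinuousOn g (Ioi 0) := by
    apply ContinuousOn.pow
    apply ContinuousOn.div
    · exact (continuous_const.mul (continuous_const.sub Real.continuous_cos)).continuousOn
    · exact (continuous_pow 2).continuousOn
    · intro s hs; exact pow_ne_zero _ (ne_of_gt hs)
  have hg_nonneg : ∀ s, 0 ≤ g s := fun s => pow_nonneg f_nonneg n
  -- integrable on Ioc 0 (2π)
  have hInt1 : IntegrableOn g (Ioc 0 (2*π)) := by
    apply Integrable.mono' (g := fun _ => (1:ℝ))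
    · exact integrableOn_const measure_Ioc_lt_top.ne
    · exact (hcont.mono Ioc_subset_Ioi_self).aestronglyMeasurable measurableSet_Ioc
    · filter_upwards [ae_restrict_mem measurableSet_Ioc] with s hs
      rw [Real.norm_eq_abs, abs_of_nonneg (hg_nonneg s)]
      exact pow_le_one₀ f_nonneg (f_le_one (ne_of_gt hs.1))
  -- tail domination
  have htail_pt : ∀ s ∈ Ioi (2*π), g s ≤ 4^n * s ^ (-(2*N)) := by
    intro s hs
    have hs0 : (0:ℝ) < s := lt_trans (by positivity) hs
    have h1 : g s ≤ (4 * (s^2)⁻¹)^n := pow_le_pow_left₀ f_nonneg (f_le_inv_sq hs0) n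
    have h2 : (4 * (s^2)⁻¹)^n = 4^n * s ^ (-(2*N)) := by
      rw [mul_pow, inv_pow, ← pow_mul]
      congr 1
      rw [show -(2*N) = ((-(2*n:ℤ) : ℤ) : ℝ) by push_cast; ring, Real.rpow_intCast,
        zpow_neg]
      norm_cast
    linarith [h1, h2.le]
  have hIntTail : IntegrableOn (fun s : ℝ => (4:ℝ)^n * s ^ (-(2*N))) (Ioi (2*π)) := by
    apply Integrable.const_mul
    apply integrableOn_Ioi_rpow_of_lt _ (by positivity)
    nlinarith
  have hInt2 : IntegrableOn g (Ioi (2*π)) := by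
    apply Integrable.mono' hIntTail
    · exact (hcont.mono (Ioi_subset_Ioi (by positivity))).aestronglyMeasurable measurableSet_Ioi
    · filter_upwards [ae_restrict_mem measurableSet_Ioi] with s hs
      rw [Real.norm_eq_abs, abs_of_nonneg (hg_nonneg s)]
      exact htail_pt s hs
  -- split
  have hsplit : ∫ s in Ioi (0:ℝ), g s
      = (∫ s in Ioc 0 (2*π), g s) + ∫ s in Ioi (2*π), g s := by
    rw [← setIntegral_union (Ioc_disjoint_Ioi le_rfl) measurableSet_Ioi hInt1 hInt2,
      Ioc_union_Ioi_eq_Ioi (by positivity)]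
  -- head bound
  have hb : (0:ℝ) < N/12 := by linarith
  have hIntGauss : Integrable (fun s : ℝ => Real.exp (-(N/12) * s^2)) := by
    exact integrable_exp_neg_mul_sq hb
  have hhead : (∫ s in Ioc 0 (2*π), g s) ≤ Real.sqrt (π / (N/12)) / 2 := by
    have step1 : (∫ s in Ioc 0 (2*π), g s)
        ≤ ∫ s in Ioc 0 (2*π), Real.exp (-(N/12) * s^2) := by
      apply setIntegral_mono_on hInt1 (hIntGauss.integrableOn) measurableSet_Ioc
      intro s hs
      have h1 : g s ≤ Real.exp (-(s^2/12)) ^ n :=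
        pow_le_pow_left₀ f_nonneg (f_le_exp hs.1 hs.2) n
      have h2 : Real.exp (-(s^2/12)) ^ n = Real.exp (-(N/12) * s^2) := by
        rw [← Real.exp_nat_mul]; congr 1; push_cast; ring
      linarith [h1, h2.le]
    have step2 : (∫ s in Ioc 0 (2*π), Real.exp (-(N/12) * s^2))
        ≤ ∫ s in Ioi (0:ℝ), Real.exp (-(N/12) * s^2) := by
      apply setIntegral_mono_set hIntGauss.integrableOn
      · filter_upwards with s using le_of_lt (Real.exp_pos _)
      · exact HasSubset.Subset.eventuallyLE Ioc_subset_Ioi_self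
    rw [integral_gaussian_Ioi] at step2
    linarith
  -- tail bound
  have htailval : (∫ s in Ioi (2*π), (4:ℝ)^n * s ^ (-(2*N)))
      = 4^n * ((2*π) ^ (-(2*N) + 1) / (2*N - 1)) := by
    rw [MeasureTheory.integral_const_mul, integral_Ioi_rpow_of_lt (by nlinarith) (by positivity)]
    rw [neg_div, ← div_neg]
    congr 1
    ring
  have htail : (∫ s in Ioi (2*π), g s) ≤ 4^n * ((2*π) ^ (-(2*N) + 1) / (2*N - 1)) := by
    rw [← htailval]
    exact setIntegral_mono_on hInt2 hIntTail measurableSet_Ioi htail_pt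
  -- combine
  have hsum : ∫ s in Ioi (0:ℝ), g s
      ≤ Real.sqrt (π / (N/12)) / 2 + 4^n * ((2*π) ^ (-(2*N) + 1) / (2*N - 1)) := by
    rw [hsplit]; exact add_le_add hhead htail
  have hmul : (1/π) * (∫ s in Ioi (0:ℝ), g s)
      ≤ (1/π) * (Real.sqrt (π / (N/12)) / 2 + 4^n * ((2*π) ^ (-(2*N) + 1) / (2*N - 1))) :=
    mul_le_mul_of_nonneg_left hsum (by positivity)
  refine le_trans hmul (le_of_eq ?_)
  -- algebra: identify the two terms
  have e1 : (1/π) * (Real.sqrt (π / (N/12)) / 2) = Real.sqrt (3 / (π * N)) := by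
    rw [show π / (N/12) = (3/(π*N)) * (2*π)^2 by field_simp; ring,
      Real.sqrt_mul (by positivity), Real.sqrt_sq (by positivity)]
    field_simp
  have e2 : (1/π) * (4^n * ((2*π) ^ (-(2*N) + 1) / (2*N - 1)))
      = 2 / ((2*N - 1) * π ^ (2*n)) := by
    have hrw : (2*π : ℝ) ^ (-(2*N) + 1) = ((2*π) ^ (2*n : ℕ))⁻¹ * (2*π) := by
      rw [show -(2*N) + 1 = -((2*n : ℕ):ℝ) + 1 by push_cast; ring,
        Real.rpow_add (by positivity), Real.rpow_neg (by positivity),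
        Real.rpow_natCast, Real.rpow_one]
    rw [hrw]
    have h4 : (4:ℝ)^n = 2^(2*n) := by rw [pow_mul]; norm_num
    have hmp : ((2*π):ℝ)^(2*n) = 2^(2*n) * π^(2*n) := mul_pow 2 π (2*n)
    have h2n1 : (0:ℝ) < 2*N - 1 := by linarith
    have hpow : (0:ℝ) < π^(2*n) := by positivity
    rw [h4, hmp]
    field_simp
  rw [mul_add, e1, e2]
end

section
/- Let F be a non-singular Borel probability distribution on ℝ. Then there exist a > 0, u ∈ ℝ, θ ∈ (0, 1], and a Borel probability distribution H₂ on ℝ such that F ∗ F = (1 − θ)·H₂ + θ·(H₁ ∗ δ_u), where H₁ is the probability distribution with triangular density κ_a and δ_u is the Dirac measure at u. -/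
open MeasureTheory

/-- A distribution on ℝ is non-singular if it dominates a nonzero sub-probability
measure having a density with respect to Lebesgue measure. -/
def NonSingular (μ : Measure ℝ) : Prop :=
  ∃ f : ℝ → ENNReal, Measurable f ∧ volume.withDensity f ≠ 0 ∧ volume.withDensity f ≤ μ

/-- Triangular density with parameter `a > 0`:
`κ_a(x) = (1/a)(1 − |x|/a)` for `|x| ≤ a` and `0` otherwise. -/
noncomputable def triangularDensity (a : ℝ) (x : ℝ) : ℝ :=
  if |x| ≤ a then (1 / a) * (1 - |x| / a) else 0

open MeasureTheory Measure Metric Filter Set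

lemma triangular_eq_max (a : ℝ) (ha : 0 < a) :
    triangularDensity a = fun x => max ((1 / a) * (1 - |x| / a)) 0 := by
  funext x
  unfold triangularDensity
  rcases le_or_gt |x| a with h | h
  · rw [if_pos h, max_eq_left]
    have h1 : |x| / a ≤ 1 := (div_le_one ha).2 h
    have : 0 ≤ 1 - |x| / a := by linarith
    positivity
  · rw [if_neg h.not_ge, eq_comm, max_eq_right]
    apply mul_nonpos_of_nonneg_of_nonpos (by positivity)
    have : 1 < |x| / a := (one_lt_div ha).2 h
    linarith

lemma triangular_nonneg (a : ℝ) (ha : 0 < a) (x : ℝ) : 0 ≤ triangularDensity a x := by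
  rw [triangular_eq_max a ha]; exact le_max_right _ _

lemma triangular_le (a : ℝ) (ha : 0 < a) (x : ℝ) : triangularDensity a x ≤ 1 / a := by
  rw [triangular_eq_max a ha]
  apply max_le _ (by positivity)
  rcases le_or_gt 0 (1 - |x| / a) with h | h
  · calc 1/a * (1 - |x|/a) ≤ 1/a * 1 := by
          apply mul_le_mul_of_nonneg_left _ (by positivity)
          have : 0 ≤ |x| / a := by positivity
          linarith
      _ = 1/a := mul_one _
  · calc 1/a * (1 - |x|/a) ≤ 0 := mul_nonpos_of_nonneg_of_nonpos (by positivity) h.le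
      _ ≤ 1/a := by positivity

lemma triangular_continuous (a : ℝ) (ha : 0 < a) : Continuous (triangularDensity a) := by
  rw [triangular_eq_max a ha]
  exact (continuous_const.mul (continuous_const.sub (continuous_abs.div_const a))).max
    continuous_const

lemma triangular_support (a : ℝ) (ha : 0 < a) :
    HasCompactSupport (triangularDensity a) := by
  apply HasCompactSupport.intro isCompact_Icc (K := Icc (-a) a)
  intro x hx
  unfold triangularDensity
  rw [if_neg]
  rw [mem_Icc, not_and_or] at hx
  rcases hx with h | h
  · push_neg at h; rw [abs_of_neg (by linarith)]; linarith
  · push_neg at h; rw [abs_of_pos (by linarith)]; linarith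


lemma habs (a : ℝ) (ha : 0 < a) : ∫ x in (-a)..a, |x| = a ^ 2 := by
  rw [← intervalIntegral.integral_add_adjacent_intervals (b := 0)
      (continuous_abs.intervalIntegrable _ _) (continuous_abs.intervalIntegrable _ _)]
  have h1 : ∫ x in (-a)..0, |x| = ∫ x in (-a)..0, -x := by
    apply intervalIntegral.integral_congr
    intro x hx
    rw [uIcc_of_le (by linarith)] at hx
    exact abs_of_nonpos hx.2
  have h2 : ∫ x in (0:ℝ)..a, |x| = ∫ x in (0:ℝ)..a, x := by
    apply intervalIntegral.integral_congr
    intro x hx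
    rw [uIcc_of_le (by linarith)] at hx
    exact abs_of_nonneg hx.1
  rw [h1, h2, intervalIntegral.integral_neg, integral_id, integral_id]
  ring

lemma triangular_indicator (a : ℝ) :
    triangularDensity a = (Icc (-a) a).indicator (fun x => 1/a * (1 - |x|/a)) := by
  funext x
  simp [triangularDensity, indicator, ← abs_le]

lemma triangular_integral (a : ℝ) (ha : 0 < a) :
    ∫ x, triangularDensity a x = 1 := by
  have : ∫ x, triangularDensity a x = ∫ x in Icc (-a) a, 1/a * (1 - |x|/a) := by
    rw [triangular_indicator, integral_indicator measurableSet_Icc]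
  rw [this, integral_Icc_eq_integral_Ioc, ← intervalIntegral.integral_of_le (by linarith)]
  rw [intervalIntegral.integral_const_mul]
  have hsub : ∫ x in (-a)..a, (1 - |x|/a) = (∫ x in (-a)..a, (1:ℝ)) - (∫ x in (-a)..a, |x|)/a := by
    rw [← intervalIntegral.integral_div]
    exact intervalIntegral.integral_sub (intervalIntegrable_const)
      ((continuous_abs.div_const a).intervalIntegrable _ _)
  rw [hsub, habs a ha, intervalIntegral.integral_const]
  field_simp
  ring

lemma indicator_one_mul {s : Set ℝ} (g : ℝ → ENNReal) (y : ℝ) :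
    s.indicator g y = s.indicator 1 y * g y := by
  by_cases h : y ∈ s <;> simp [Set.indicator, h]

-- translation of withDensity
lemma map_add_withDensity (f : ℝ → ENNReal) (hf : Measurable f) (c : ℝ) :
    (volume.withDensity f).map (· + c) = volume.withDensity (fun x => f (x - c)) := by
  ext s hs
  rw [Measure.map_apply (measurable_add_const c) hs,
    withDensity_apply _ ((measurable_add_const c) hs), withDensity_apply _ hs,
    ← lintegral_indicator ((measurable_add_const c) hs), ← lintegral_indicator hs]
  have := lintegral_add_right_eq_self (μ := (volume : Measure ℝ))
    (fun z => s.indicator 1 z * f (z - c)) c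
  simp_rw [indicator_one_mul f, indicator_one_mul (fun x => f (x - c))]
  rw [← this]
  congr 1
  funext x
  have : ((· + c) ⁻¹' s).indicator 1 x = s.indicator (1 : ℝ → ENNReal) (x + c) := by
    by_cases h : x + c ∈ s <;> simp [Set.indicator, mem_preimage, h]
  rw [this]
  simp

-- conv with dirac
lemma conv_dirac_eq (μ : Measure ℝ) [SFinite μ] (c : ℝ) :
    Measure.conv μ (Measure.dirac c) = μ.map (· + c) := by
  unfold Measure.conv
  rw [Measure.prod_dirac, Measure.map_map (by fun_prop) (by fun_prop)]
  rfl

-- monotonicity of conv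
lemma conv_mono {μ₁ μ₂ ν₁ ν₂ : Measure ℝ} [SFinite μ₁] [SFinite ν₁] [SFinite μ₂] [SFinite ν₂]
    (hμ : μ₁ ≤ μ₂) (hν : ν₁ ≤ ν₂) : Measure.conv μ₁ ν₁ ≤ Measure.conv μ₂ ν₂ := by
  refine Measure.le_intro fun s hs _ => ?_
  unfold Measure.conv
  rw [Measure.map_apply (by fun_prop) hs, Measure.map_apply (by fun_prop) hs,
    Measure.prod_apply (measurable_add hs), Measure.prod_apply (measurable_add hs)]
  exact lintegral_mono' hμ fun x => hν _

-- conv of two withDensity measures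
lemma conv_withDensity (f g : ℝ → ENNReal) (hf : Measurable f) (hg : Measurable g) :
    Measure.conv (volume.withDensity f) (volume.withDensity g) =
      volume.withDensity (fun x => ∫⁻ y, f y * g (x - y)) := by
  ext s hs
  unfold Measure.conv
  rw [Measure.map_apply (by fun_prop) hs, Measure.prod_apply (measurable_add hs)]
  have inner : ∀ x : ℝ, (volume.withDensity g) (Prod.mk x ⁻¹' ((fun p : ℝ × ℝ => p.1 + p.2) ⁻¹' s))
      = ∫⁻ y, s.indicator 1 y * g (y - x) := by
    intro x
    have hE : MeasurableSet (Prod.mk x ⁻¹' ((fun p : ℝ × ℝ => p.1 + p.2) ⁻¹' s)) :=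
      measurable_prodMk_left (measurable_add hs)
    rw [withDensity_apply _ hE, ← lintegral_indicator hE]
    have := lintegral_add_left_eq_self (μ := (volume : Measure ℝ))
      (fun z => s.indicator 1 z * g (z - x)) x
    rw [← this]
    congr 1
    funext y
    simp_rw [indicator_one_mul g]
    have : ((Prod.mk x ⁻¹' ((fun p : ℝ × ℝ => p.1 + p.2) ⁻¹' s))).indicator 1 y
        = s.indicator (1 : ℝ → ENNReal) (x + y) := by
      by_cases h : x + y ∈ s <;> simp [Set.indicator, mem_preimage, h]
    rw [this]
    simp
  simp_rw [inner]
  have hmeas : Measurable (fun x => ∫⁻ y, s.indicator 1 y * g (y - x)) := by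
    apply Measurable.lintegral_prod_right (f := fun (x : ℝ) (y : ℝ) => s.indicator 1 y * g (y - x))
    exact (((measurable_one.indicator hs).comp measurable_snd)).mul
      (hg.comp (measurable_snd.sub measurable_fst))
  rw [lintegral_withDensity_eq_lintegral_mul _ hf hmeas]
  have step : ∀ x : ℝ, f x * ∫⁻ y, s.indicator 1 y * g (y - x)
      = ∫⁻ y, s.indicator 1 y * (f x * g (y - x)) := by
    intro x
    have hm : Measurable fun y : ℝ => s.indicator 1 y * g (y - x) :=
      (measurable_one.indicator hs).mul (hg.comp (measurable_id.sub measurable_const))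
    rw [← lintegral_const_mul _ hm]
    congr 1; funext y; ring
  calc ∫⁻ x, (f * fun x => ∫⁻ y, s.indicator 1 y * g (y - x)) x
      = ∫⁻ x, ∫⁻ y, s.indicator 1 y * (f x * g (y - x)) := by
        simp only [Pi.mul_apply]; exact lintegral_congr step
    _ = ∫⁻ y, ∫⁻ x, s.indicator 1 y * (f x * g (y - x)) := by
        apply lintegral_lintegral_swap
        apply Measurable.aemeasurable
        exact (((measurable_one.indicator hs).comp measurable_snd)).mul
          ((hf.comp measurable_fst).mul (hg.comp (measurable_snd.sub measurable_fst)))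
    _ = ∫⁻ y, s.indicator 1 y * ∫⁻ x, f x * g (y - x) := by
        apply lintegral_congr; intro y
        have hm : Measurable fun x : ℝ => f x * g (y - x) :=
          hf.mul (hg.comp (measurable_const.sub measurable_id))
        rw [lintegral_const_mul _ hm]
    _ = (volume.withDensity (fun x => ∫⁻ y, f y * g (x - y))) s := by
        rw [withDensity_apply _ hs, ← lintegral_indicator hs]
        apply lintegral_congr; intro y
        exact (indicator_one_mul (fun a => ∫⁻ t, f t * g (a - t)) y).symm

lemma exists_subset_density (f : ℝ → ENNReal) (hf : Measurable f)
    (h0 : volume.withDensity f ≠ 0) :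
    ∃ (c : ℝ) (A : Set ℝ), 0 < c ∧ MeasurableSet A ∧ 0 < volume A ∧ volume A ≠ ⊤ ∧
      ∀ x ∈ A, ENNReal.ofReal c ≤ f x := by
  set S : ℕ → Set ℝ := fun n =>
    {x | ENNReal.ofReal ((n + 1 : ℝ)⁻¹) ≤ f x} ∩ Icc (-(n + 1 : ℝ)) (n + 1) with hS
  have hSm : ∀ n, MeasurableSet (S n) := fun n =>
    (hf measurableSet_Ici).inter measurableSet_Icc
  have hex : ∃ n, 0 < volume (S n) := by
    by_contra hn
    push_neg at hn
    simp only [le_zero_iff] at hn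
    have hcov : {x | f x ≠ 0} ⊆ ⋃ n, S n := by
      intro x hx
      obtain ⟨n₂, hn₂⟩ := exists_nat_ge |x|
      obtain ⟨n₁, hn₁⟩ : ∃ n : ℕ, ENNReal.ofReal ((n + 1 : ℝ)⁻¹) ≤ f x := by
        rcases eq_or_ne (f x) ⊤ with h | h
        · exact ⟨0, by simp [h]⟩
        · have htr : 0 < (f x).toReal := ENNReal.toReal_pos hx h
          obtain ⟨n, hn'⟩ := exists_nat_one_div_lt htr
          refine ⟨n, ?_⟩
          rw [one_div] at hn'
          calc ENNReal.ofReal ((n + 1 : ℝ)⁻¹) ≤ ENNReal.ofReal (f x).toReal :=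
                ENNReal.ofReal_le_ofReal hn'.le
            _ = f x := ENNReal.ofReal_toReal h
      have hc1 : ((n₁ : ℝ)) ≤ ((max n₁ n₂ : ℕ) : ℝ) := Nat.cast_le.2 (le_max_left _ _)
      have hc2 : ((n₂ : ℝ)) ≤ ((max n₁ n₂ : ℕ) : ℝ) := Nat.cast_le.2 (le_max_right _ _)
      refine mem_iUnion.2 ⟨max n₁ n₂, ⟨?_, ?_⟩⟩
      · refine le_trans (ENNReal.ofReal_le_ofReal ?_) hn₁
        apply inv_anti₀ (by positivity)
        linarith
      · have habs := abs_le.1 (hn₂.trans (by linarith : (n₂ : ℝ) ≤ ((max n₁ n₂ : ℕ) : ℝ) + 1))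
        exact ⟨habs.1, habs.2⟩
    have hnull : volume {x | f x ≠ 0} = 0 :=
      measure_mono_null hcov (by rw [measure_iUnion_null_iff]; exact fun n => hn n)
    apply h0
    have hae : f =ᵐ[volume] 0 := by
      rw [Filter.eventuallyEq_iff_exists_mem]
      exact ⟨{x | f x = 0}, by rwa [mem_ae_iff, compl_setOf]; , fun x hx => hx⟩
    rw [withDensity_congr_ae hae, withDensity_zero]
  obtain ⟨n, hn⟩ := hex
  refine ⟨(n + 1 : ℝ)⁻¹, S n, by positivity, hSm n, hn, ?_, fun x hx => hx.1⟩
  refine ne_top_of_le_ne_top ?_ (measure_mono inter_subset_right)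
  rw [Real.volume_Icc]
  exact ENNReal.ofReal_ne_top

lemma vol_diff_eq (B A : Set ℝ) (hA : MeasurableSet A) (hB : MeasurableSet B)
    (hfin : volume B ≠ ⊤) : volume (B \ A) = volume B - volume (A ∩ B) := by
  have hset : B \ A = B \ (A ∩ B) := by
    ext y
    simp only [Set.mem_diff, Set.mem_inter_iff]
    tauto
  rw [hset]
  apply measure_diff Set.inter_subset_right (hA.inter hB).nullMeasurableSet
  exact ne_top_of_le_ne_top hfin (measure_mono Set.inter_subset_right)

lemma exists_density_interval (A : Set ℝ) (hA : MeasurableSet A) (hpos : 0 < volume A) :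
    ∃ u r : ℝ, 0 < r ∧ ∀ x : ℝ, |x - 2*u| ≤ r/2 →
      ENNReal.ofReal r ≤ volume (A ∩ {y | x - y ∈ A}) := by
  -- get a density point
  have hae := Besicovitch.ae_tendsto_measure_inter_div volume A
  have hres : volume.restrict A ≠ 0 := by
    intro h
    rw [← Measure.restrict_apply_univ A, h] at hpos
    simp at hpos
  obtain ⟨u, hu⟩ : ∃ u : ℝ, Tendsto (fun r => volume (A ∩ closedBall u r) / volume (closedBall u r))
      (nhdsWithin 0 (Ioi 0)) (nhds 1) := by
    have : (ae (volume.restrict A)).NeBot := ae_neBot.2 hres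
    exact hae.exists
  -- get radius bound
  have hev : ∀ᶠ ρ in nhdsWithin (0:ℝ) (Ioi 0),
      ENNReal.ofReal (15/16) < volume (A ∩ closedBall u ρ) / volume (closedBall u ρ) :=
    hu.eventually (eventually_gt_nhds (by
      rw [← ENNReal.ofReal_one]
      exact ENNReal.ofReal_lt_ofReal_iff_of_nonneg (by norm_num) |>.2 (by norm_num)))
  obtain ⟨r₀, hr₀pos, hr₀⟩ : ∃ r₀ > 0, ∀ ρ, 0 < ρ → ρ ≤ r₀ →
      ENNReal.ofReal (15/16) < volume (A ∩ closedBall u ρ) / volume (closedBall u ρ) := by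
    rw [eventually_nhdsWithin_iff] at hev
    rw [Metric.eventually_nhds_iff] at hev
    obtain ⟨ε, hε, hball⟩ := hev
    exact ⟨ε/2, by linarith, fun ρ h1 h2 => hball (by
      rw [Real.dist_eq, sub_zero, abs_of_pos h1]; linarith) h1⟩
  -- density estimate at any radius ρ ≤ r₀
  have hdens : ∀ ρ, 0 < ρ → ρ ≤ r₀ →
      ENNReal.ofReal (15/16 * (2*ρ)) ≤ volume (A ∩ closedBall u ρ) := by
    intro ρ h1 h2
    have h3 := (hr₀ ρ h1 h2).le
    rw [ENNReal.le_div_iff_mul_le (Or.inl (by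
        rw [Real.volume_closedBall]; simp [ENNReal.ofReal_eq_zero]; linarith))
      (Or.inl (by rw [Real.volume_closedBall]; exact ENNReal.ofReal_ne_top))] at h3
    calc ENNReal.ofReal (15/16 * (2*ρ))
        = ENNReal.ofReal (15/16) * ENNReal.ofReal (2*ρ) := ENNReal.ofReal_mul (by norm_num)
      _ = ENNReal.ofReal (15/16) * volume (closedBall u ρ) := by rw [Real.volume_closedBall]
      _ ≤ volume (A ∩ closedBall u ρ) := h3
  set r := (2/3) * r₀ with hr
  have hrpos : 0 < r := by positivity
  refine ⟨u, r, hrpos, fun x hx => ?_⟩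
  -- volumes of the two exceptional sets
  have hB : volume (closedBall u r) = ENNReal.ofReal (2*r) := Real.volume_closedBall u r
  have hBA : volume (closedBall u r \ A) ≤ ENNReal.ofReal (r/8) := by
    rw [vol_diff_eq _ _ hA measurableSet_closedBall (by rw [hB]; exact ENNReal.ofReal_ne_top), hB]
    have h2 := hdens r hrpos (by rw [hr]; linarith)
    calc ENNReal.ofReal (2*r) - volume (A ∩ closedBall u r)
        ≤ ENNReal.ofReal (2*r) - ENNReal.ofReal (15/16 * (2*r)) := tsub_le_tsub_left h2 _
      _ = ENNReal.ofReal (2*r - 15/16*(2*r)) := (ENNReal.ofReal_sub _ (by positivity)).symm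
      _ = ENNReal.ofReal (r/8) := by ring_nf
  have hBA2 : volume (closedBall u r \ {y | x - y ∈ A}) ≤ ENNReal.ofReal (3*r/16) := by
    have hsub : closedBall u r \ {y | x - y ∈ A} ⊆
        (fun y => x - y) ⁻¹' (closedBall u (3*r/2) \ A) := by
      intro y hy
      rcases hy with ⟨hy1, hy2⟩
      constructor
      · rw [mem_closedBall, Real.dist_eq] at hy1 ⊢
        rw [abs_le] at hx hy1 ⊢
        constructor <;> linarith
      · exact hy2
    calc volume (closedBall u r \ {y | x - y ∈ A})
        ≤ volume ((fun y => x - y) ⁻¹' (closedBall u (3*r/2) \ A)) := measure_mono hsub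
      _ = volume (closedBall u (3*r/2) \ A) :=
          (measurePreserving_sub_left volume x).measure_preimage
            ((measurableSet_closedBall.diff hA).nullMeasurableSet)
      _ ≤ ENNReal.ofReal (3*r/16) := by
          rw [vol_diff_eq _ _ hA measurableSet_closedBall
            (by rw [Real.volume_closedBall]; exact ENNReal.ofReal_ne_top), Real.volume_closedBall]
          have h2 := hdens (3*r/2) (by positivity) (by rw [hr]; linarith)
          calc ENNReal.ofReal (2*(3*r/2)) - volume (A ∩ closedBall u (3*r/2))
              ≤ ENNReal.ofReal (2*(3*r/2)) - ENNReal.ofReal (15/16 * (2*(3*r/2))) :=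
                tsub_le_tsub_left h2 _
            _ = ENNReal.ofReal (2*(3*r/2) - 15/16*(2*(3*r/2))) :=
                (ENNReal.ofReal_sub _ (by positivity)).symm
            _ = ENNReal.ofReal (3*r/16) := by ring_nf
  -- combine
  have hcover : closedBall u r ⊆ (A ∩ {y | x - y ∈ A}) ∪
      ((closedBall u r \ A) ∪ (closedBall u r \ {y | x - y ∈ A})) := by
    intro y hy
    by_cases h1 : y ∈ A
    · by_cases h2 : x - y ∈ A
      · exact Or.inl ⟨h1, h2⟩
      · exact Or.inr (Or.inr ⟨hy, h2⟩)
    · exact Or.inr (Or.inl ⟨hy, h1⟩)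
  have hmain : ENNReal.ofReal (2*r) ≤ volume (A ∩ {y | x - y ∈ A}) + ENNReal.ofReal (r/8 + 3*r/16) := by
    calc ENNReal.ofReal (2*r) = volume (closedBall u r) := hB.symm
      _ ≤ volume (A ∩ {y | x - y ∈ A}) + volume ((closedBall u r \ A) ∪ (closedBall u r \ {y | x - y ∈ A})) :=
          le_trans (measure_mono hcover) (measure_union_le _ _)
      _ ≤ volume (A ∩ {y | x - y ∈ A}) + (ENNReal.ofReal (r/8) + ENNReal.ofReal (3*r/16)) := by
          gcongr
          exact le_trans (measure_union_le _ _) (add_le_add hBA hBA2)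
      _ = volume (A ∩ {y | x - y ∈ A}) + ENNReal.ofReal (r/8 + 3*r/16) := by
          rw [ENNReal.ofReal_add (by positivity) (by positivity)]
  have : ENNReal.ofReal (2*r) - ENNReal.ofReal (r/8 + 3*r/16) ≤ volume (A ∩ {y | x - y ∈ A}) :=
    tsub_le_iff_right.2 hmain
  refine le_trans ?_ this
  rw [← ENNReal.ofReal_sub _ (by positivity)]
  apply ENNReal.ofReal_le_ofReal
  linarith


lemma triangular_lintegral (a : ℝ) (ha : 0 < a) :
    ∫⁻ x, ENNReal.ofReal (triangularDensity a x) = 1 := by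
  have hint : Integrable (triangularDensity a) :=
    (triangular_continuous a ha).integrable_of_hasCompactSupport (triangular_support a ha)
  rw [← ofReal_integral_eq_lintegral_ofReal hint
    (Filter.Eventually.of_forall (triangular_nonneg a ha)), triangular_integral a ha,
    ENNReal.ofReal_one]


/-- If `F` is a non-singular probability distribution on ℝ, then there exist `a > 0`,
`u ∈ ℝ`, `θ ∈ (0, 1]` and a probability distribution `H₂` such that
`F ∗ F = (1 − θ) H₂ + θ (H₁ ∗ δ_u)`, where `H₁` has triangular density `κ_a`. -/
theorem nonsingular_conv_decomposition
    (F : Measure ℝ) [IsProbabilityMeasure F] (hF : NonSingular F) :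
    ∃ (a : ℝ), 0 < a ∧ ∃ (u θ : ℝ), θ ∈ Set.Ioc (0 : ℝ) 1 ∧
      ∃ (H₂ : Measure ℝ), IsProbabilityMeasure H₂ ∧
        Measure.conv F F =
          ENNReal.ofReal (1 - θ) • H₂ +
            ENNReal.ofReal θ •
              Measure.conv
                (volume.withDensity fun x => ENNReal.ofReal (triangularDensity a x))
                (Measure.dirac u) := by

  obtain ⟨f, hf, h0, hle⟩ := hF
  obtain ⟨c, A, hc, hAm, hA0, hAfin, hcA⟩ := exists_subset_density f hf h0
  obtain ⟨u, r, hrpos, hball⟩ := exists_density_interval A hAm hA0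
  set g : ℝ → ENNReal := A.indicator (fun _ => ENNReal.ofReal c) with hgdef
  have hgmeas : Measurable g := measurable_const.indicator hAm
  have hgF : volume.withDensity g ≤ F := by
    refine le_trans (withDensity_mono (Filter.Eventually.of_forall fun x => ?_)) hle
    by_cases hx : x ∈ A
    · simpa [hgdef, Set.indicator_of_mem hx] using hcA x hx
    · simp [hgdef, Set.indicator_of_notMem hx]
  haveI hgfin : IsFiniteMeasure (volume.withDensity g) := by
    constructor
    rw [withDensity_apply _ MeasurableSet.univ, Measure.restrict_univ, hgdef,
      lintegral_indicator_const hAm]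
    exact ENNReal.mul_lt_top ENNReal.ofReal_lt_top hAfin.lt_top
  -- parameters
  have ha : (0:ℝ) < r/2 := by linarith
  set θ : ℝ := min 2⁻¹ ((r/2) * c^2 * r) with hθdef
  have hθpos : 0 < θ := lt_min (by norm_num) (by positivity)
  have hθhalf : θ ≤ 2⁻¹ := min_le_left _ _
  have h1θpos : (0:ℝ) < 1 - θ := by
    have : θ ≤ 2⁻¹ := hθhalf
    norm_num at this ⊢
    linarith
  have hne0 : ENNReal.ofReal (1-θ) ≠ 0 := (ENNReal.ofReal_pos.2 h1θpos).ne'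
  have hnetop : ENNReal.ofReal (1-θ) ≠ ⊤ := ENNReal.ofReal_ne_top
  -- triangular measure
  set κ : ℝ → ENNReal := fun x => ENNReal.ofReal (triangularDensity (r/2) x) with hκdef
  have hκmeas : Measurable κ := (triangular_continuous _ ha).measurable.ennreal_ofReal
  haveI hκprob : IsProbabilityMeasure (volume.withDensity κ) := by
    constructor
    rw [withDensity_apply _ MeasurableSet.univ, Measure.restrict_univ]
    exact triangular_lintegral _ ha
  set T : Measure ℝ := Measure.conv (volume.withDensity κ) (Measure.dirac (2*u)) with hTdef
  haveI hTprob : IsProbabilityMeasure T := by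
    rw [hTdef]
    infer_instance
  have hT : T = volume.withDensity (fun x => κ (x - 2*u)) := by
    rw [hTdef, conv_dirac_eq _ (2*u), map_add_withDensity _ hκmeas (2*u)]
  -- density of conv of g with itself
  set m : ℝ → ENNReal := fun x => ∫⁻ y, g y * g (x - y) with hmdef
  have hconv : Measure.conv (volume.withDensity g) (volume.withDensity g)
      = volume.withDensity m := conv_withDensity g g hgmeas hgmeas
  have hm_lower : ∀ x, |x - 2*u| ≤ r/2 → ENNReal.ofReal (c^2*r) ≤ m x := by
    intro x hx
    have hmx : m x = (ENNReal.ofReal c * ENNReal.ofReal c) * volume (A ∩ {y | x - y ∈ A}) := by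
      rw [hmdef]
      have : ∀ y, g y * g (x - y)
          = (A ∩ {y | x - y ∈ A}).indicator (fun _ => ENNReal.ofReal c * ENNReal.ofReal c) y := by
        intro y
        by_cases h1 : y ∈ A <;> by_cases h2 : x - y ∈ A <;>
          simp [hgdef, Set.indicator, h1, h2]
      simp_rw [this]
      have hsm : MeasurableSet {y : ℝ | x - y ∈ A} := (measurable_const.sub measurable_id) hAm
      rw [lintegral_indicator_const (hAm.inter hsm)]
    rw [hmx]
    calc ENNReal.ofReal (c^2*r) = (ENNReal.ofReal c * ENNReal.ofReal c) * ENNReal.ofReal r := by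
          rw [← ENNReal.ofReal_mul hc.le, ← ENNReal.ofReal_mul (by positivity)]
          ring_nf
      _ ≤ (ENNReal.ofReal c * ENNReal.ofReal c) * volume (A ∩ {y | x - y ∈ A}) := by
          gcongr
          exact hball x hx
  -- the key inequality
  have key : ENNReal.ofReal θ • T ≤ Measure.conv F F := by
    have hm2 : Measurable fun x : ℝ => κ (x - 2*u) :=
      hκmeas.comp (measurable_id.sub measurable_const)
    rw [hT, ← withDensity_smul _ hm2]
    refine le_trans (withDensity_mono (Filter.Eventually.of_forall fun x => ?_))
      (le_trans (le_of_eq hconv.symm) (conv_mono hgF hgF))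
    simp only [Pi.smul_apply, smul_eq_mul]
    by_cases hx : |x - 2*u| ≤ r/2
    · calc ENNReal.ofReal θ * κ (x - 2*u)
          ≤ ENNReal.ofReal θ * ENNReal.ofReal (1/(r/2)) := by
            gcongr
            exact ENNReal.ofReal_le_ofReal (triangular_le _ ha _)
        _ = ENNReal.ofReal (θ * (1/(r/2))) := (ENNReal.ofReal_mul hθpos.le).symm
        _ ≤ ENNReal.ofReal (c^2*r) := by
            apply ENNReal.ofReal_le_ofReal
            have hθ2 : θ ≤ (r/2) * c^2 * r := min_le_right _ _
            calc θ * (1/(r/2)) ≤ ((r/2) * c^2 * r) * (1/(r/2)) := by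
                  apply mul_le_mul_of_nonneg_right hθ2 (by positivity)
              _ = c^2*r := by field_simp
        _ ≤ m x := hm_lower x hx
    · have : triangularDensity (r/2) (x - 2*u) = 0 := by
        unfold triangularDensity
        rw [if_neg hx]
      rw [hκdef]
      simp [this]
  -- define H₂
  haveI hθTfin : IsFiniteMeasure (ENNReal.ofReal θ • T) := by
    constructor
    rw [Measure.smul_apply, measure_univ, smul_eq_mul, mul_one]
    exact ENNReal.ofReal_lt_top
  set H₂ : Measure ℝ := (ENNReal.ofReal (1-θ))⁻¹ • (Measure.conv F F - ENNReal.ofReal θ • T)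
    with hH₂def
  have hsub1 : (1:ENNReal) - ENNReal.ofReal θ = ENNReal.ofReal (1-θ) := by
    rw [ENNReal.ofReal_sub 1 hθpos.le, ENNReal.ofReal_one]
  refine ⟨r/2, ha, 2*u, θ, ⟨hθpos, le_trans hθhalf (by norm_num)⟩, H₂, ?_, ?_⟩
  · constructor
    rw [hH₂def, Measure.smul_apply, Measure.sub_apply MeasurableSet.univ key,
      Measure.smul_apply, measure_univ, measure_univ, smul_eq_mul, smul_eq_mul, mul_one,
      hsub1, ENNReal.inv_mul_cancel hne0 hnetop]
  · have hcancel : ENNReal.ofReal (1 - θ) • H₂ = Measure.conv F F - ENNReal.ofReal θ • T := by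
      rw [hH₂def, smul_smul, ENNReal.mul_inv_cancel hne0 hnetop, one_smul]
    rw [hcancel]
    exact (Measure.sub_add_cancel_of_le key).symm
end

section
/- Let H₁ and H₂ be Borel probability distributions on ℝ, u ∈ ℝ, θ ∈ (0, 1], and let F = (1 − θ)·H₂ + θ·(H₁ ∗ δ_u). Then for every integer m ≥ 1, every integer k₀ with 0 ≤ k₀ ≤ m, and every γ > 0, d_TV(F^{∗m}, F^{∗m} ∗ δ_γ) ≤ d_TV(H₁^{∗k₀}, H₁^{∗k₀} ∗ δ_γ) + P(I ≤ k₀ − 1), where I is a Binomial(m, θ) random variable. -/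
open MeasureTheory

/-- Total variation distance between two Borel measures on ℝ:
`d_TV(μ, ν) = sup_{A Borel} |μ(A) − ν(A)|`. -/
noncomputable def dTV (μ ν : Measure ℝ) : ℝ :=
  ⨆ A : {s : Set ℝ // MeasurableSet s}, |(μ A.1).toReal - (ν A.1).toReal|

/-- `k`-fold convolution power of a measure on ℝ, with `μ^{∗0} = δ₀`. -/
noncomputable def convPow (μ : Measure ℝ) : ℕ → Measure ℝ
  | 0 => Measure.dirac 0
  | n + 1 => Measure.conv (convPow μ n) μ

open scoped ENNReal

namespace TVProof

/-! ### Basic convolution lemmas -/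

lemma conv_def (μ ν : Measure ℝ) :
    μ.conv ν = Measure.map (fun p : ℝ × ℝ => p.1 + p.2) (μ.prod ν) := rfl

lemma smul_conv (c : ℝ≥0∞) (μ ν : Measure ℝ) [SFinite μ] [SFinite ν] :
    (c • μ).conv ν = c • μ.conv ν := by
  have h : (c • μ).prod ν = c • (μ.prod ν) := by
    ext s hs
    rw [Measure.prod_apply hs, Measure.smul_apply, Measure.prod_apply hs,
      lintegral_smul_measure]
  rw [conv_def, conv_def, h, Measure.map_smul]

lemma conv_smul (c : ℝ≥0∞) (μ ν : Measure ℝ) [SFinite μ] [SFinite ν] :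
    μ.conv (c • ν) = c • μ.conv ν := by
  rw [Measure.conv_comm, smul_conv, Measure.conv_comm]

lemma conv_assoc (μ ν ρ : Measure ℝ) [SFinite μ] [SFinite ν] [SFinite ρ] :
    (μ.conv ν).conv ρ = μ.conv (ν.conv ρ) := by
  have hadd : Measurable fun p : ℝ × ℝ => p.1 + p.2 := by fun_prop
  have h1 := Measure.map_prod_map (f := fun p : ℝ × ℝ => p.1 + p.2) (g := (id : ℝ → ℝ))
    (μ.prod ν) ρ hadd measurable_id
  rw [Measure.map_id] at h1
  have h2 := Measure.map_prod_map (f := (id : ℝ → ℝ)) (g := fun p : ℝ × ℝ => p.1 + p.2)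
    μ (ν.prod ρ) measurable_id hadd
  rw [Measure.map_id] at h2
  rw [conv_def (μ.conv ν) ρ, conv_def μ ν, h1, conv_def μ (ν.conv ρ), conv_def ν ρ, h2,
    Measure.map_map hadd (by fun_prop), Measure.map_map hadd (by fun_prop),
    ← Measure.prodAssoc_prod,
    Measure.map_map (by fun_prop) (MeasurableEquiv.prodAssoc).measurable]
  refine congrArg (fun f => Measure.map f ((μ.prod ν).prod ρ)) (funext fun p => ?_)
  show p.1.1 + p.1.2 + p.2 = p.1.1 + (p.1.2 + p.2)
  exact add_assoc _ _ _

/-! ### The commutative semiring of s-finite measures under convolution -/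

def SM : Type := {μ : Measure ℝ // SFinite μ}

instance (x : SM) : SFinite x.1 := x.2

noncomputable instance : CommSemiring SM where
  zero := ⟨0, inferInstance⟩
  one := ⟨Measure.dirac 0, inferInstance⟩
  add x y := ⟨x.1 + y.1, inferInstance⟩
  mul x y := ⟨x.1.conv y.1, inferInstance⟩
  natCast n := ⟨(n : ℝ≥0∞) • Measure.dirac (0 : ℝ), inferInstance⟩
  nsmul n x := ⟨(n : ℝ≥0∞) • x.1, inferInstance⟩
  nsmul_zero x := Subtype.ext (by
    show ((0 : ℕ) : ℝ≥0∞) • x.1 = (0 : Measure ℝ)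
    rw [Nat.cast_zero, zero_smul])
  nsmul_succ n x := Subtype.ext (by
    show (((n + 1 : ℕ)) : ℝ≥0∞) • x.1 = (n : ℝ≥0∞) • x.1 + x.1
    rw [Nat.cast_succ, add_smul, one_smul])
  add_assoc x y z := Subtype.ext (add_assoc _ _ _)
  zero_add x := Subtype.ext (zero_add _)
  add_zero x := Subtype.ext (add_zero _)
  add_comm x y := Subtype.ext (add_comm _ _)
  left_distrib x y z := Subtype.ext (Measure.conv_add _ _ _)
  right_distrib x y z := Subtype.ext (Measure.add_conv _ _ _)
  zero_mul x := Subtype.ext (by show (0 : Measure ℝ).conv _ = 0; simp)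
  mul_zero x := Subtype.ext (by show Measure.conv _ (0 : Measure ℝ) = 0; simp)
  mul_assoc x y z := Subtype.ext (conv_assoc _ _ _)
  one_mul x := Subtype.ext (by show (Measure.dirac 0).conv x.1 = x.1; simp)
  mul_one x := Subtype.ext (by show x.1.conv (Measure.dirac 0) = x.1; simp)
  mul_comm x y := Subtype.ext (Measure.conv_comm _ _)
  natCast_zero := Subtype.ext (by show ((0 : ℕ) : ℝ≥0∞) • _ = (0 : Measure ℝ); simp)
  natCast_succ n := Subtype.ext (by
    show (((n + 1 : ℕ)) : ℝ≥0∞) • Measure.dirac (0 : ℝ)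
      = (n : ℝ≥0∞) • Measure.dirac (0 : ℝ) + Measure.dirac (0 : ℝ)
    rw [Nat.cast_succ, add_smul, one_smul])

noncomputable instance : SMul ℝ≥0∞ SM := ⟨fun c x => ⟨c • x.1, inferInstance⟩⟩

noncomputable instance : MulAction ℝ≥0∞ SM where
  one_smul x := Subtype.ext (one_smul _ x.1)
  mul_smul a b x := Subtype.ext (mul_smul a b x.1)

instance : IsScalarTower ℝ≥0∞ SM SM :=
  ⟨fun c x y => Subtype.ext (smul_conv c x.1 y.1)⟩

instance : SMulCommClass ℝ≥0∞ SM SM :=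
  ⟨fun c x y => Subtype.ext (conv_smul c x.1 y.1).symm⟩

noncomputable def mk (μ : Measure ℝ) [SFinite μ] : SM := ⟨μ, ‹_›⟩

lemma val_mul (x y : SM) : (x * y).1 = x.1.conv y.1 := rfl

lemma val_smul (c : ℝ≥0∞) (x : SM) : (c • x).1 = c • x.1 := rfl

lemma val_pow (μ : Measure ℝ) [SFinite μ] (n : ℕ) : ((mk μ) ^ n).1 = convPow μ n := by
  induction n with
  | zero => rw [pow_zero]; rfl
  | succ n ih =>
    rw [pow_succ]
    show ((mk μ) ^ n).1.conv μ = convPow μ (n + 1)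
    rw [ih]
    rfl

/-- `Subtype.val` as an additive monoid hom. -/
noncomputable def valHom : SM →+ Measure ℝ where
  toFun := Subtype.val
  map_zero' := rfl
  map_add' _ _ := rfl

lemma val_sum {ι : Type*} (s : Finset ι) (f : ι → SM) :
    (∑ i ∈ s, f i).1 = ∑ i ∈ s, (f i).1 :=
  map_sum valHom f s

lemma mul_natCast (x : SM) (n : ℕ) : x * (n : SM) = (n : ℝ≥0∞) • x := by
  refine Subtype.ext ?_
  show x.1.conv ((n : ℝ≥0∞) • Measure.dirac (0 : ℝ)) = (n : ℝ≥0∞) • x.1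
  rw [conv_smul]
  simp

/-! ### dTV lemmas -/

instance : Nonempty {s : Set ℝ // MeasurableSet s} := ⟨⟨∅, MeasurableSet.empty⟩⟩

lemma dTV_nonneg (μ ν : Measure ℝ) : 0 ≤ dTV μ ν :=
  Real.iSup_nonneg fun _ => abs_nonneg _

lemma bddAbove_dTV (μ ν : Measure ℝ) [IsFiniteMeasure μ] [IsFiniteMeasure ν] :
    BddAbove (Set.range fun A : {s : Set ℝ // MeasurableSet s} =>
      |(μ A.1).toReal - (ν A.1).toReal|) := by
  refine ⟨(μ Set.univ).toReal + (ν Set.univ).toReal, ?_⟩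
  rintro x ⟨A, rfl⟩
  have h1 : (μ A.1).toReal ≤ (μ Set.univ).toReal :=
    ENNReal.toReal_mono (measure_ne_top _ _) (measure_mono (Set.subset_univ _))
  have h2 : (ν A.1).toReal ≤ (ν Set.univ).toReal :=
    ENNReal.toReal_mono (measure_ne_top _ _) (measure_mono (Set.subset_univ _))
  have h3 : (0 : ℝ) ≤ (μ A.1).toReal := ENNReal.toReal_nonneg
  have h4 : (0 : ℝ) ≤ (ν A.1).toReal := ENNReal.toReal_nonneg
  rw [abs_le]
  constructor <;> linarith

lemma le_dTV (μ ν : Measure ℝ) [IsFiniteMeasure μ] [IsFiniteMeasure ν]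
    {A : Set ℝ} (hA : MeasurableSet A) :
    |(μ A).toReal - (ν A).toReal| ≤ dTV μ ν :=
  le_ciSup (bddAbove_dTV μ ν) ⟨A, hA⟩

lemma dTV_le_of (μ ν : Measure ℝ) {c : ℝ}
    (h : ∀ A : Set ℝ, MeasurableSet A → |(μ A).toReal - (ν A).toReal| ≤ c) :
    dTV μ ν ≤ c :=
  ciSup_le fun A => h A.1 A.2

/-! ### Data processing: convolution does not increase dTV -/

lemma conv_apply_eq (ρ ν : Measure ℝ) [SFinite ρ] [SFinite ν]
    {A : Set ℝ} (hA : MeasurableSet A) :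
    (ρ.conv ν) A = ∫⁻ y, ρ ((fun x => y + x) ⁻¹' A) ∂ν := by
  have hadd : Measurable fun p : ℝ × ℝ => p.1 + p.2 := by fun_prop
  rw [Measure.conv_comm, conv_def, Measure.map_apply hadd hA,
    Measure.prod_apply (hadd hA)]
  rfl

lemma conv_le_conv_add (ρ σ ν : Measure ℝ) [IsFiniteMeasure ρ] [IsFiniteMeasure σ]
    [IsProbabilityMeasure ν] {A : Set ℝ} (hA : MeasurableSet A) :
    (ρ.conv ν) A ≤ (σ.conv ν) A + ENNReal.ofReal (dTV ρ σ) := by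
  rw [conv_apply_eq ρ ν hA, conv_apply_eq σ ν hA]
  calc ∫⁻ y, ρ ((fun x => y + x) ⁻¹' A) ∂ν
      ≤ ∫⁻ y, (σ ((fun x => y + x) ⁻¹' A) + ENNReal.ofReal (dTV ρ σ)) ∂ν := by
        refine lintegral_mono fun y => ?_
        have hAy : MeasurableSet ((fun x => y + x) ⁻¹' A) :=
          hA.preimage (by fun_prop)
        have h1 := le_dTV ρ σ hAy
        have h2 : (ρ ((fun x => y + x) ⁻¹' A)).toReal
            ≤ (σ ((fun x => y + x) ⁻¹' A)).toReal + dTV ρ σ := by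
          have := abs_le.1 h1
          linarith [this.2]
        calc ρ ((fun x => y + x) ⁻¹' A)
            = ENNReal.ofReal (ρ ((fun x => y + x) ⁻¹' A)).toReal :=
              (ENNReal.ofReal_toReal (measure_ne_top _ _)).symm
          _ ≤ ENNReal.ofReal ((σ ((fun x => y + x) ⁻¹' A)).toReal + dTV ρ σ) :=
              ENNReal.ofReal_le_ofReal h2
          _ ≤ ENNReal.ofReal (σ ((fun x => y + x) ⁻¹' A)).toReal
              + ENNReal.ofReal (dTV ρ σ) := ENNReal.ofReal_add_le
          _ = σ ((fun x => y + x) ⁻¹' A) + ENNReal.ofReal (dTV ρ σ) := by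
              rw [ENNReal.ofReal_toReal (measure_ne_top _ _)]
    _ = ∫⁻ y, σ ((fun x => y + x) ⁻¹' A) ∂ν + ENNReal.ofReal (dTV ρ σ) := by
        rw [lintegral_add_right _ measurable_const, lintegral_const, measure_univ, mul_one]

lemma dTV_comm (μ ν : Measure ℝ) : dTV μ ν = dTV ν μ := by
  unfold dTV
  congr 1
  funext A
  rw [abs_sub_comm]

lemma abs_conv_sub_conv_le (μ μ' ν : Measure ℝ) [IsFiniteMeasure μ] [IsFiniteMeasure μ']
    [IsProbabilityMeasure ν] {A : Set ℝ} (hA : MeasurableSet A) :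
    |((μ.conv ν) A).toReal - ((μ'.conv ν) A).toReal| ≤ dTV μ μ' := by
  have hD : 0 ≤ dTV μ μ' := dTV_nonneg _ _
  have h1 := conv_le_conv_add μ μ' ν hA
  have h2 := conv_le_conv_add μ' μ ν hA
  rw [dTV_comm μ' μ] at h2
  have hne1 : (μ'.conv ν) A + ENNReal.ofReal (dTV μ μ') ≠ ⊤ :=
    ENNReal.add_ne_top.2 ⟨measure_ne_top _ _, ENNReal.ofReal_ne_top⟩
  have hne2 : (μ.conv ν) A + ENNReal.ofReal (dTV μ μ') ≠ ⊤ :=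
    ENNReal.add_ne_top.2 ⟨measure_ne_top _ _, ENNReal.ofReal_ne_top⟩
  have t1 := ENNReal.toReal_mono hne1 h1
  have t2 := ENNReal.toReal_mono hne2 h2
  rw [ENNReal.toReal_add (measure_ne_top _ _) ENNReal.ofReal_ne_top,
    ENNReal.toReal_ofReal hD] at t1
  rw [ENNReal.toReal_add (measure_ne_top _ _) ENNReal.ofReal_ne_top,
    ENNReal.toReal_ofReal hD] at t2
  rw [abs_le]
  constructor <;> linarith

/-! ### Probability instances for convolution powers -/

instance convPow_isProb (μ : Measure ℝ) [IsProbabilityMeasure μ] (n : ℕ) :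
    IsProbabilityMeasure (convPow μ n) := by
  induction n with
  | zero =>
    show IsProbabilityMeasure (Measure.dirac (0 : ℝ))
    infer_instance
  | succ n ih =>
    show IsProbabilityMeasure ((convPow μ n).conv μ)
    infer_instance

end TVProof

open TVProof in
/-- If `F = (1 − θ) H₂ + θ (H₁ ∗ δ_u)`, then for every `m ≥ 1`, `0 ≤ k₀ ≤ m` and
`γ > 0`, `d_TV(F^{∗m}, F^{∗m} ∗ δ_γ) ≤ d_TV(H₁^{∗k₀}, H₁^{∗k₀} ∗ δ_γ) + P(I ≤ k₀ − 1)`,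
where `I ∼ Binomial(m, θ)`, i.e. `P(I ≤ k₀ − 1) = Σ_{k<k₀} C(m,k) θᵏ (1 − θ)^{m−k}`. -/
theorem tv_shift_convPow_mixture
    (H₁ H₂ : Measure ℝ) [IsProbabilityMeasure H₁] [IsProbabilityMeasure H₂]
    (u : ℝ) (θ : ℝ) (hθ : θ ∈ Set.Ioc (0 : ℝ) 1)
    (F : Measure ℝ)
    (hF : F = ENNReal.ofReal (1 - θ) • H₂ +
      ENNReal.ofReal θ • Measure.conv H₁ (Measure.dirac u))
    (m : ℕ) (hm : 1 ≤ m) (k₀ : ℕ) (hk₀ : k₀ ≤ m) (γ : ℝ) (hγ : 0 < γ) :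
    dTV (convPow F m) (Measure.conv (convPow F m) (Measure.dirac γ)) ≤
      dTV (convPow H₁ k₀) (Measure.conv (convPow H₁ k₀) (Measure.dirac γ)) +
        ∑ k ∈ Finset.range k₀, (m.choose k : ℝ) * θ ^ k * (1 - θ) ^ (m - k) := by
  obtain ⟨hθ0, hθ1⟩ := hθ
  have h1θ : (0 : ℝ) ≤ 1 - θ := by linarith
  set a : ℝ≥0∞ := ENNReal.ofReal (1 - θ) with ha
  set b : ℝ≥0∞ := ENNReal.ofReal θ with hb
  set μ₁ : Measure ℝ := H₁.conv (Measure.dirac u) with hμ₁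
  haveI : SFinite F := by rw [hF]; infer_instance
  set c : ℕ → ℝ≥0∞ := fun k => (b ^ k * a ^ (m - k)) * (m.choose k : ℝ≥0∞) with hc
  set w : ℕ → ℝ := fun k => (m.choose k : ℝ) * θ ^ k * (1 - θ) ^ (m - k) with hw
  set ρ : ℕ → Measure ℝ := fun k => (convPow μ₁ k).conv (convPow H₂ (m - k)) with hρ
  set D : ℝ := dTV (convPow H₁ k₀) ((convPow H₁ k₀).conv (Measure.dirac γ)) with hD
  have hD0 : 0 ≤ D := dTV_nonneg _ _
  have hprob : ∀ k, IsProbabilityMeasure (ρ k) := fun k => by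
    simp only [hρ]; infer_instance
  -- SM-level binomial expansion
  have hmkF : TVProof.mk F = b • TVProof.mk μ₁ + a • TVProof.mk H₂ :=
    Subtype.ext (by show F = b • μ₁ + a • H₂; rw [hF]; exact add_comm _ _)
  have key : TVProof.mk F ^ m
      = ∑ k ∈ Finset.range (m + 1), c k • (TVProof.mk μ₁ ^ k * TVProof.mk H₂ ^ (m - k)) := by
    rw [hmkF, add_pow]
    refine Finset.sum_congr rfl fun k hk => ?_
    rw [mul_natCast, smul_pow, smul_pow, smul_mul_assoc, mul_smul_comm, smul_smul, smul_smul]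
    congr 1
    simp only [hc]
    ring
  have hval : ∀ k, (c k • (TVProof.mk μ₁ ^ k * TVProof.mk H₂ ^ (m - k))).1 = c k • ρ k := by
    intro k
    show c k • ((TVProof.mk μ₁ ^ k).1.conv ((TVProof.mk H₂ ^ (m - k)).1)) = _
    rw [val_pow, val_pow]
  have hP : convPow F m = ∑ k ∈ Finset.range (m + 1), c k • ρ k := by
    have h := congrArg Subtype.val key
    rw [val_pow, val_sum] at h
    rw [h]
    exact Finset.sum_congr rfl fun k _ => hval k
  have key2 : TVProof.mk F ^ m * TVProof.mk (Measure.dirac γ)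
      = ∑ k ∈ Finset.range (m + 1),
          c k • (TVProof.mk μ₁ ^ k * TVProof.mk H₂ ^ (m - k) * TVProof.mk (Measure.dirac γ)) := by
    rw [key, Finset.sum_mul]
    exact Finset.sum_congr rfl fun k _ => smul_mul_assoc _ _ _
  have hQ : (convPow F m).conv (Measure.dirac γ)
      = ∑ k ∈ Finset.range (m + 1), c k • (ρ k).conv (Measure.dirac γ) := by
    have h := congrArg Subtype.val key2
    rw [val_sum] at h
    have hl : (TVProof.mk F ^ m * TVProof.mk (Measure.dirac γ)).1
        = (convPow F m).conv (Measure.dirac γ) := by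
      show (TVProof.mk F ^ m).1.conv (Measure.dirac γ) = _
      rw [val_pow]
    rw [← hl, h]
    refine Finset.sum_congr rfl fun k _ => ?_
    show c k • ((TVProof.mk μ₁ ^ k * TVProof.mk H₂ ^ (m - k)).1.conv (Measure.dirac γ)) = _
    rw [val_mul, val_pow, val_pow]
  -- toReal of weights
  have hcw : ∀ k, (c k).toReal = w k := by
    intro k
    simp only [hc, hw]
    rw [ENNReal.toReal_mul, ENNReal.toReal_mul, ENNReal.toReal_pow, ENNReal.toReal_pow,
      ENNReal.toReal_natCast, ha, hb, ENNReal.toReal_ofReal hθ0.le, ENNReal.toReal_ofReal h1θ]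
    ring
  have hcne : ∀ k, c k ≠ ⊤ := by
    intro k
    simp only [hc]
    exact ENNReal.mul_ne_top (ENNReal.mul_ne_top (ENNReal.pow_ne_top ENNReal.ofReal_ne_top)
      (ENNReal.pow_ne_top ENNReal.ofReal_ne_top)) (ENNReal.natCast_ne_top _)
  have hwnn : ∀ k, 0 ≤ w k := fun k => by
    simp only [hw]
    positivity
  have hwsum : ∑ k ∈ Finset.range (m + 1), w k = 1 := by
    have h := add_pow θ (1 - θ) m
    have h2 : θ + (1 - θ) = 1 := by ring
    rw [h2, one_pow] at h
    rw [show ∑ k ∈ Finset.range (m + 1), w k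
        = ∑ k ∈ Finset.range (m + 1), θ ^ k * (1 - θ) ^ (m - k) * (m.choose k : ℝ) from
      Finset.sum_congr rfl fun k _ => by simp only [hw]; ring, ← h]
  -- per-k bound for k ≥ k₀
  have hΔD : ∀ k, k₀ ≤ k → ∀ {A : Set ℝ}, MeasurableSet A →
      |((ρ k) A).toReal - (((ρ k).conv (Measure.dirac γ)) A).toReal| ≤ D := by
    intro k hk A hA
    obtain ⟨j, rfl⟩ : ∃ j, k = k₀ + j := ⟨k - k₀, by omega⟩
    set R : SM := TVProof.mk H₁ ^ j * TVProof.mk (Measure.dirac u) ^ (k₀ + j)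
      * TVProof.mk H₂ ^ (m - (k₀ + j)) with hR
    have h1 : TVProof.mk μ₁ = TVProof.mk H₁ * TVProof.mk (Measure.dirac u) := rfl
    have e1 : TVProof.mk μ₁ ^ (k₀ + j) * TVProof.mk H₂ ^ (m - (k₀ + j))
        = TVProof.mk H₁ ^ k₀ * R := by
      rw [h1, hR, mul_pow, pow_add]
      ring
    have e2 : TVProof.mk μ₁ ^ (k₀ + j) * TVProof.mk H₂ ^ (m - (k₀ + j))
          * TVProof.mk (Measure.dirac γ)
        = (TVProof.mk H₁ ^ k₀ * TVProof.mk (Measure.dirac γ)) * R := by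
      rw [e1]; ring
    have eρ : ρ (k₀ + j) = (convPow H₁ k₀).conv R.1 := by
      show (convPow μ₁ (k₀ + j)).conv (convPow H₂ (m - (k₀ + j))) = _
      rw [← val_pow μ₁, ← val_pow H₂, ← val_mul, e1, val_mul, val_pow]
    have eργ : (ρ (k₀ + j)).conv (Measure.dirac γ)
        = ((convPow H₁ k₀).conv (Measure.dirac γ)).conv R.1 := by
      show ((convPow μ₁ (k₀ + j)).conv (convPow H₂ (m - (k₀ + j)))).conv (Measure.dirac γ) = _
      rw [← val_pow μ₁, ← val_pow H₂, ← val_mul,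
        show Measure.dirac γ = (TVProof.mk (Measure.dirac γ)).1 from rfl, ← val_mul, e2,
        val_mul, val_mul, val_pow]
    haveI hRprob : IsProbabilityMeasure R.1 := by
      have : R.1 = ((convPow H₁ j).conv (convPow (Measure.dirac u) (k₀ + j))).conv
          (convPow H₂ (m - (k₀ + j))) := by
        rw [hR, val_mul, val_mul, val_pow, val_pow, val_pow]
      rw [this]
      infer_instance
    haveI : IsFiniteMeasure (convPow H₁ k₀) := inferInstance
    haveI : IsFiniteMeasure ((convPow H₁ k₀).conv (Measure.dirac γ)) := inferInstance
    rw [eργ, eρ, hD]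
    exact abs_conv_sub_conv_le _ _ _ hA
  -- main estimate
  refine dTV_le_of _ _ fun A hA => ?_
  rw [hQ, hP, Measure.finset_sum_apply, Measure.finset_sum_apply]
  have hne1 : ∀ k ∈ Finset.range (m + 1), (c k • ρ k) A ≠ ⊤ := fun k _ => by
    haveI := hprob k
    rw [Measure.smul_apply, smul_eq_mul]
    exact ENNReal.mul_ne_top (hcne k) (measure_ne_top _ _)
  have hne2 : ∀ k ∈ Finset.range (m + 1), (c k • (ρ k).conv (Measure.dirac γ)) A ≠ ⊤ :=
    fun k _ => by
      haveI := hprob k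
      rw [Measure.smul_apply, smul_eq_mul]
      exact ENNReal.mul_ne_top (hcne k) (measure_ne_top _ _)
  rw [ENNReal.toReal_sum hne1, ENNReal.toReal_sum hne2, ← Finset.sum_sub_distrib]
  have hterm : ∀ k, ((c k • ρ k) A).toReal - ((c k • (ρ k).conv (Measure.dirac γ)) A).toReal
      = w k * (((ρ k) A).toReal - (((ρ k).conv (Measure.dirac γ)) A).toReal) := by
    intro k
    rw [Measure.smul_apply, Measure.smul_apply, smul_eq_mul, smul_eq_mul]
    have h1 : (c k * (ρ k) A).toReal = (c k).toReal * ((ρ k) A).toReal := ENNReal.toReal_mul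
    have h2 : (c k * ((ρ k).conv (Measure.dirac γ)) A).toReal
        = (c k).toReal * (((ρ k).conv (Measure.dirac γ)) A).toReal := ENNReal.toReal_mul
    rw [h1, h2, hcw]
    ring
  rw [Finset.sum_congr rfl fun k _ => hterm k]
  have habs : ∀ k, k ∈ Finset.range (m + 1) →
      |w k * (((ρ k) A).toReal - (((ρ k).conv (Measure.dirac γ)) A).toReal)|
      ≤ w k * |((ρ k) A).toReal - (((ρ k).conv (Measure.dirac γ)) A).toReal| := fun k _ => by
    rw [abs_mul, abs_of_nonneg (hwnn k)]
  have hΔ1 : ∀ k, |((ρ k) A).toReal - (((ρ k).conv (Measure.dirac γ)) A).toReal| ≤ 1 := by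
    intro k
    haveI := hprob k
    have h1 : ((ρ k) A).toReal ≤ 1 := by
      have := prob_le_one (μ := ρ k) (s := A)
      exact ENNReal.toReal_le_of_le_ofReal one_pos.le (by simpa using this)
    have h2 : (((ρ k).conv (Measure.dirac γ)) A).toReal ≤ 1 := by
      have := prob_le_one (μ := (ρ k).conv (Measure.dirac γ)) (s := A)
      exact ENNReal.toReal_le_of_le_ofReal one_pos.le (by simpa using this)
    have h3 : (0:ℝ) ≤ ((ρ k) A).toReal := ENNReal.toReal_nonneg
    have h4 : (0:ℝ) ≤ (((ρ k).conv (Measure.dirac γ)) A).toReal := ENNReal.toReal_nonneg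
    rw [abs_le]
    constructor <;> linarith
  calc |∑ k ∈ Finset.range (m + 1),
        w k * (((ρ k) A).toReal - (((ρ k).conv (Measure.dirac γ)) A).toReal)|
      ≤ ∑ k ∈ Finset.range (m + 1),
        w k * |((ρ k) A).toReal - (((ρ k).conv (Measure.dirac γ)) A).toReal| :=
        (Finset.abs_sum_le_sum_abs _ _).trans (Finset.sum_le_sum habs)
    _ ≤ D + ∑ k ∈ Finset.range k₀, w k := by
        rw [← Finset.sum_filter_add_sum_filter_not (Finset.range (m + 1)) (fun k => k < k₀)]
        have hfil : Finset.filter (fun k => k < k₀) (Finset.range (m + 1)) = Finset.range k₀ := by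
          ext x
          simp only [Finset.mem_filter, Finset.mem_range]
          omega
        have hb1 : ∑ k ∈ Finset.filter (fun k => k < k₀) (Finset.range (m + 1)),
            w k * |((ρ k) A).toReal - (((ρ k).conv (Measure.dirac γ)) A).toReal|
            ≤ ∑ k ∈ Finset.range k₀, w k := by
          rw [hfil]
          refine Finset.sum_le_sum fun k _ => ?_
          calc w k * |((ρ k) A).toReal - (((ρ k).conv (Measure.dirac γ)) A).toReal|
              ≤ w k * 1 := mul_le_mul_of_nonneg_left (hΔ1 k) (hwnn k)
            _ = w k := mul_one _
        have hb2 : ∑ k ∈ Finset.filter (fun k => ¬ k < k₀) (Finset.range (m + 1)),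
            w k * |((ρ k) A).toReal - (((ρ k).conv (Measure.dirac γ)) A).toReal|
            ≤ D := by
          calc ∑ k ∈ Finset.filter (fun k => ¬ k < k₀) (Finset.range (m + 1)),
              w k * |((ρ k) A).toReal - (((ρ k).conv (Measure.dirac γ)) A).toReal|
              ≤ ∑ k ∈ Finset.filter (fun k => ¬ k < k₀) (Finset.range (m + 1)), w k * D := by
                refine Finset.sum_le_sum fun k hk => ?_
                have hk₀k : k₀ ≤ k := by
                  simp only [Finset.mem_filter] at hk
                  omega
                exact mul_le_mul_of_nonneg_left (hΔD k hk₀k hA) (hwnn k)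
            _ = (∑ k ∈ Finset.filter (fun k => ¬ k < k₀) (Finset.range (m + 1)), w k) * D := by
                rw [Finset.sum_mul]
            _ ≤ 1 * D := by
                refine mul_le_mul_of_nonneg_right ?_ hD0
                calc ∑ k ∈ Finset.filter (fun k => ¬ k < k₀) (Finset.range (m + 1)), w k
                    ≤ ∑ k ∈ Finset.range (m + 1), w k :=
                      Finset.sum_le_sum_of_subset_of_nonneg (Finset.filter_subset _ _)
                        (fun k _ _ => hwnn k)
                  _ = 1 := hwsum
            _ = D := one_mul D
        linarith
    _ = D + ∑ k ∈ Finset.range k₀, (m.choose k : ℝ) * θ ^ k * (1 - θ) ^ (m - k) := rfl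
end

section
/- Let η₁, η₂, … be i.i.d. real random variables with E η₁ = 0 and Var(η₁) = 1, let Sₙ = η₁ + … + ηₙ, Wₙ = Sₙ/√n, and Wₙ′ = Wₙ − η₁/√n. Let f : ℝ → ℝ be continuously differentiable with bounded derivative and f bounded. Then for every n ≥ 1, E[f′(Wₙ) − Wₙ f(Wₙ)] = E[f′(Wₙ′ + η₁/√n) − f′(Wₙ′)] − ∫₀¹ E[ (f′(Wₙ′ + u η₁/√n) − f′(Wₙ′)) · η₁² ] du. -/
open MeasureTheory ProbabilityTheory Real

private lemma integrable_of_bdd {Ω : Type*} [MeasurableSpace Ω] {P : Measure Ω}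
    [IsFiniteMeasure P] {g : Ω → ℝ} (hg : AEStronglyMeasurable g P) {B : ℝ}
    (hB : ∀ ω, |g ω| ≤ B) : Integrable g P :=
  (integrable_const B).mono' hg (Filter.Eventually.of_forall fun ω => by
    simpa [Real.norm_eq_abs] using hB ω)

private lemma integrable_mul_bdd {Ω : Type*} [MeasurableSpace Ω] {P : Measure Ω}
    {g h : Ω → ℝ} (hg : Integrable g P) (hh : AEStronglyMeasurable h P)
    {B : ℝ} (hb : ∀ x, |h x| ≤ B) : Integrable (fun ω => g ω * h ω) P := by
  have := Integrable.bdd_mul hg hh (Filter.Eventually.of_forall fun x => by simpa [Real.norm_eq_abs] using hb x)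
  simpa [mul_comm] using this

/-- Stein-type identity: for i.i.d. `η i` with mean `0` and variance `1`,
`W = S n / √n`, `W' = W − η 1/√n`, and `f` continuously differentiable, bounded with
bounded derivative, for every `n ≥ 1`,
`E[f′(W) − W f(W)] = E[f′(W' + η 1/√n) − f′(W')]
  − ∫₀¹ E[(f′(W' + u η 1/√n) − f′(W')) η 1²] du`. -/
theorem stein_identity_iid
    {Ω : Type*} [MeasurableSpace Ω] (P : Measure Ω) [IsProbabilityMeasure P]
    (η : ℕ → Ω → ℝ) (hmeas : ∀ i, Measurable (η i))
    (hindep : iIndepFun η P)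
    (hident : ∀ i, Measure.map (η i) P = Measure.map (η 0) P)
    (hL2 : MemLp (η 0) 2 P)
    (hmean : ∫ ω, η 0 ω ∂P = 0) (hvar : variance (η 0) P = 1)
    (n : ℕ) (hn : 1 ≤ n)
    (S : ℕ → Ω → ℝ) (hS : ∀ k ω, S k ω = ∑ i ∈ Finset.range k, η i ω)
    (W : Ω → ℝ) (hW : ∀ ω, W ω = S n ω / Real.sqrt n)
    (W' : Ω → ℝ) (hW' : ∀ ω, W' ω = W ω - η 0 ω / Real.sqrt n)
    (f : ℝ → ℝ) (hf : Differentiable ℝ f) (hf' : Continuous (deriv f))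
    (hfb : ∃ C : ℝ, ∀ x, |f x| ≤ C) (hf'b : ∃ C : ℝ, ∀ x, |deriv f x| ≤ C) :
    ∫ ω, (deriv f (W ω) - W ω * f (W ω)) ∂P =
      (∫ ω, (deriv f (W' ω + η 0 ω / Real.sqrt n) - deriv f (W' ω)) ∂P) -
        ∫ u in (0 : ℝ)..1,
          ∫ ω, (deriv f (W' ω + u * η 0 ω / Real.sqrt n) - deriv f (W' ω)) *
            (η 0 ω) ^ 2 ∂P := by
  classical
  obtain ⟨C, hC⟩ := hfb
  obtain ⟨C', hC'⟩ := hf'b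
  set G := deriv f with hG
  have hGc : Continuous G := hf'
  have hfc : Continuous f := hf.continuous
  have hnpos : (0:ℝ) < n := by exact_mod_cast Nat.lt_of_lt_of_le Nat.zero_lt_one hn
  set c := Real.sqrt n with hcdef
  have hc : 0 < c := Real.sqrt_pos.mpr hnpos
  have hc2 : c * c = n := Real.mul_self_sqrt (le_of_lt hnpos)
  have hcne : c ≠ 0 := ne_of_gt hc
  -- measurability
  have hSm : Measurable (S n) := by
    have h : S n = fun ω => ∑ i ∈ Finset.range n, η i ω := funext (hS n)
    rw [h]; exact Finset.measurable_sum _ fun i _ => hmeas i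
  have hWm : Measurable W := by
    have h : W = fun ω => S n ω / c := funext hW
    rw [h]; exact hSm.div_const c
  have hW'm : Measurable W' := by
    have h : W' = fun ω => W ω - η 0 ω / c := funext hW'
    rw [h]; exact hWm.sub ((hmeas 0).div_const c)
  have hWeq : ∀ ω, W ω = W' ω + η 0 ω / c := fun ω => by rw [hW' ω]; ring
  -- integrability basics
  have hη0int : Integrable (η 0) P := hL2.integrable one_le_two
  have hident' : ∀ i, IdentDistrib (η i) (η 0) P P :=
    fun i => ⟨(hmeas i).aemeasurable, (hmeas 0).aemeasurable, hident i⟩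
  have hηint : ∀ i, Integrable (η i) P := fun i => ((hident' i).integrable_iff).mpr hη0int
  have hsqint : Integrable (fun ω => η 0 ω ^ 2) P := hL2.integrable_sq
  have hEsq : ∫ ω, η 0 ω ^ 2 ∂P = 1 := by
    have h := variance_eq_sub hL2
    rw [hvar, hmean] at h
    simpa [Pi.pow_apply] using h.symm
  -- decomposition of `W'`
  have h0mem : (0:ℕ) ∈ Finset.range n := Finset.mem_range.mpr hn
  have hW'sum : ∀ ω, W' ω = (∑ j ∈ (Finset.range n).erase 0, η j ω) / c := by
    intro ω
    rw [hW' ω, hW ω, hS, ← Finset.add_sum_erase _ _ h0mem]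
    ring
  -- independence of W' and η 0
  have hRsum : (∑ j ∈ (Finset.range n).erase 0, η j) =
      fun ω => ∑ j ∈ (Finset.range n).erase 0, η j ω := by
    ext ω; simp [Finset.sum_apply]
  have hR0 : IndepFun (fun ω => ∑ j ∈ (Finset.range n).erase 0, η j ω) (η 0) P := by
    have h := hindep.indepFun_finsetSum_of_notMem hmeas (s := (Finset.range n).erase 0)
      (Finset.notMem_erase 0 _)
    rwa [hRsum] at h
  have hindW' : IndepFun W' (η 0) P := by
    have h : W' = (fun x => x / c) ∘ (fun ω => ∑ j ∈ (Finset.range n).erase 0, η j ω) :=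
      funext fun ω => hW'sum ω
    rw [h]
    exact hR0.comp (measurable_id.div_const c) measurable_id
  -- E[η₀ f(W')] = 0
  have hfW'int : Integrable (fun ω => f (W' ω)) P :=
    integrable_of_bdd (hfc.measurable.comp hW'm).aestronglyMeasurable (fun ω => hC _)
  have hEfW'η : ∫ ω, η 0 ω * f (W' ω) ∂P = 0 := by
    have hind : IndepFun (η 0) (fun ω => f (W' ω)) P :=
      hindW'.symm.comp measurable_id hfc.measurable
    have h : (∫ ω, η 0 ω * f (W' ω) ∂P) = (∫ ω, η 0 ω ∂P) * ∫ ω, f (W' ω) ∂P :=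
      hind.integral_mul_eq_mul_integral hη0int.aestronglyMeasurable hfW'int.aestronglyMeasurable
    rw [h, hmean, zero_mul]
  -- E[G(W') η₀²] = E[G(W')]
  have hGW'int : Integrable (fun ω => G (W' ω)) P :=
    integrable_of_bdd (hGc.measurable.comp hW'm).aestronglyMeasurable (fun ω => hC' _)
  have hEGsq : ∫ ω, G (W' ω) * η 0 ω ^ 2 ∂P = ∫ ω, G (W' ω) ∂P := by
    have hind : IndepFun (fun ω => G (W' ω)) (fun ω => η 0 ω ^ 2) P :=
      hindW'.comp hGc.measurable (measurable_id.pow_const 2)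
    have h : (∫ ω, G (W' ω) * η 0 ω ^ 2 ∂P) = (∫ ω, G (W' ω) ∂P) * ∫ ω, η 0 ω ^ 2 ∂P :=
      hind.integral_mul_eq_mul_integral hGW'int.aestronglyMeasurable hsqint.aestronglyMeasurable
    rw [h, hEsq, mul_one]
  -- exchangeability
  have hfWη_int : ∀ i, Integrable (fun ω => η i ω * f (W ω)) P := fun i =>
    integrable_mul_bdd (hηint i) (hfc.measurable.comp hWm).aestronglyMeasurable (fun ω => hC _)
  have hexch : ∀ i ∈ Finset.range n,
      ∫ ω, η i ω * f (W ω) ∂P = ∫ ω, η 0 ω * f (W ω) ∂P := by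
    intro i hi
    rcases eq_or_ne i 0 with h0 | h0
    · rw [h0]
    · set s : Finset ℕ := ((Finset.range n).erase 0).erase i with hs
      have h0s : (0:ℕ) ∉ s := fun h =>
        Finset.notMem_erase 0 _ (Finset.mem_of_mem_erase h)
      have his : i ∉ s := Finset.notMem_erase i _
      set R : Ω → ℝ := fun ω => ∑ j ∈ s, η j ω with hRdef
      have hRm : Measurable R := Finset.measurable_sum _ fun j _ => hmeas j
      have hi0 : i ∈ (Finset.range n).erase 0 := Finset.mem_erase.mpr ⟨h0, hi⟩
      have hdecomp : ∀ ω, S n ω = η 0 ω + (η i ω + R ω) := by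
        intro ω
        rw [hS, ← Finset.add_sum_erase _ _ h0mem, ← Finset.add_sum_erase _ _ hi0]
      have key : ∀ k l : ℕ, k ≠ l → k ∉ s → l ∉ s →
          Measure.map (fun ω => (η k ω, (η l ω, R ω))) P =
            (Measure.map (η 0) P).prod ((Measure.map (η 0) P).prod (Measure.map R P)) := by
        intro k l hkl hks hls
        have h1 : IndepFun (η l) R P := by
          have h := hindep.indepFun_finsetSum_of_notMem hmeas (s := s) hls
          have heq : (∑ j ∈ s, η j) = R := by ext ω; simp [hRdef, Finset.sum_apply]
          rw [heq] at h; exact h.symm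
        have h2 : IndepFun (η k) (fun ω => (η l ω, R ω)) P := by
          have hdisj : Disjoint ({k} : Finset ℕ) (insert l s) := by
            simp only [Finset.disjoint_singleton_left, Finset.mem_insert, not_or]
            exact ⟨hkl, hks⟩
          have h := hindep.indepFun_finset {k} (insert l s) hdisj hmeas
          have hlm : l ∈ insert l s := Finset.mem_insert_self l s
          set ψ : (↥(insert l s) → ℝ) → ℝ × ℝ :=
            fun p => (p ⟨l, hlm⟩, ∑ j ∈ s.attach, p ⟨j.1, Finset.mem_insert_of_mem j.2⟩)
              with hψ
          have hψm : Measurable ψ :=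
            (measurable_pi_apply _).prodMk
              (Finset.measurable_sum _ fun j _ => measurable_pi_apply _)
          have h2' := h.comp
            (measurable_pi_apply (⟨k, Finset.mem_singleton_self k⟩ : ({k} : Finset ℕ))) hψm
          have e1 : ((fun p : ({k} : Finset ℕ) → ℝ => p ⟨k, Finset.mem_singleton_self k⟩) ∘
              fun a (j : ({k} : Finset ℕ)) => η j a) = η k := rfl
          have e2 : (ψ ∘ fun a (j : (insert l s : Finset ℕ)) => η j a) =
              fun ω => (η l ω, R ω) := by
            funext ω
            simp only [Function.comp_apply, hψ, hRdef]
            congr 1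
            exact Finset.sum_attach s fun j => η j ω
          rwa [e1, e2] at h2'
        have hmap2 : Measure.map (fun ω => (η l ω, R ω)) P =
            (Measure.map (η 0) P).prod (Measure.map R P) := by
          rw [(indepFun_iff_map_prod_eq_prod_map_map (hmeas l).aemeasurable
            hRm.aemeasurable).mp h1, hident l]
        rw [(indepFun_iff_map_prod_eq_prod_map_map (hmeas k).aemeasurable
          ((hmeas l).prodMk hRm).aemeasurable).mp h2, hident k, hmap2]
      have hid : IdentDistrib (fun ω => (η i ω, (η 0 ω, R ω)))
          (fun ω => (η 0 ω, (η i ω, R ω))) P P := by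
        refine ⟨((hmeas i).prodMk ((hmeas 0).prodMk hRm)).aemeasurable,
          ((hmeas 0).prodMk ((hmeas i).prodMk hRm)).aemeasurable, ?_⟩
        rw [key i 0 h0 his h0s, key 0 i (Ne.symm h0) h0s his]
      have hgm : Measurable (fun p : ℝ × ℝ × ℝ => p.1 * f ((p.1 + (p.2.1 + p.2.2)) / c)) := by
        apply measurable_fst.mul
        exact hfc.measurable.comp
          ((measurable_fst.add (measurable_snd.fst.add measurable_snd.snd)).div_const c)
      have heq := (hid.comp hgm).integral_eq
      have hl : ∀ ω, η i ω * f ((η i ω + (η 0 ω + R ω)) / c) = η i ω * f (W ω) := by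
        intro ω
        have : (η i ω + (η 0 ω + R ω)) / c = W ω := by rw [hW ω, hdecomp ω]; ring_nf
        rw [this]
      have hr : ∀ ω, η 0 ω * f ((η 0 ω + (η i ω + R ω)) / c) = η 0 ω * f (W ω) := by
        intro ω
        have : (η 0 ω + (η i ω + R ω)) / c = W ω := by rw [hW ω, hdecomp ω]
        rw [this]
      calc ∫ ω, η i ω * f (W ω) ∂P
          = ∫ ω, η i ω * f ((η i ω + (η 0 ω + R ω)) / c) ∂P := by
            exact integral_congr_ae (Filter.Eventually.of_forall fun ω => (hl ω).symm)
        _ = ∫ ω, η 0 ω * f ((η 0 ω + (η i ω + R ω)) / c) ∂P := heq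
        _ = ∫ ω, η 0 ω * f (W ω) ∂P :=
            integral_congr_ae (Filter.Eventually.of_forall fun ω => hr ω)
  -- B1 : ∫ W f(W) = c ∫ η₀ f(W)
  have hWfWint : Integrable (fun ω => W ω * f (W ω)) P := by
    have hWint : Integrable W P := by
      have h : W = fun ω => (∑ i ∈ Finset.range n, η i ω) / c := by
        funext ω; rw [hW ω, hS]
      rw [h]
      exact (integrable_finset_sum _ fun i _ => hηint i).div_const c
    exact integrable_mul_bdd hWint (hfc.measurable.comp hWm).aestronglyMeasurable (fun ω => hC _)
  have hB1 : ∫ ω, W ω * f (W ω) ∂P = c * ∫ ω, η 0 ω * f (W ω) ∂P := by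
    have h1 : ∀ ω, W ω * f (W ω) = ∑ i ∈ Finset.range n, η i ω * f (W ω) / c := by
      intro ω
      rw [hW ω, hS, div_mul_eq_mul_div, Finset.sum_mul, Finset.sum_div]
    rw [integral_congr_ae (Filter.Eventually.of_forall h1),
      integral_finset_sum _ (fun i _ => ((hfWη_int i).div_const c))]
    have h2 : ∀ i ∈ Finset.range n,
        ∫ ω, η i ω * f (W ω) / c ∂P = (∫ ω, η 0 ω * f (W ω) ∂P) / c := by
      intro i hi
      rw [integral_div, hexch i hi]
    rw [Finset.sum_congr rfl h2, Finset.sum_const, Finset.card_range, nsmul_eq_mul]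
    field_simp
    rw [← hc2]
    ring
  -- FTC pointwise
  have hFTC : ∀ ω, (∫ u in (0:ℝ)..1, G (W' ω + u * η 0 ω / c) * η 0 ω ^ 2) =
      c * (η 0 ω * (f (W ω) - f (W' ω))) := by
    intro ω
    set a := W' ω with ha
    set b := η 0 ω / c with hb
    have hderiv : ∀ u ∈ Set.uIcc (0:ℝ) 1,
        HasDerivAt (fun v : ℝ => f (a + v * b)) (G (a + u * b) * b) u := by
      intro u _
      have h1 : HasDerivAt (fun v : ℝ => a + v * b) b u := by
        simpa using ((hasDerivAt_id u).mul_const b).const_add a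
      exact ((hf (a + u * b)).hasDerivAt).comp u h1
    have hcont : Continuous (fun u : ℝ => G (a + u * b) * b) := by
      exact ((hGc.comp (continuous_const.add (continuous_id.mul continuous_const)))).mul
        continuous_const
    have hFTC0 := intervalIntegral.integral_eq_sub_of_hasDerivAt hderiv
      (hcont.intervalIntegrable 0 1)
    calc (∫ u in (0:ℝ)..1, G (W' ω + u * η 0 ω / c) * η 0 ω ^ 2)
        = ∫ u in (0:ℝ)..1, (G (a + u * b) * b) * (c * η 0 ω) := by
          refine intervalIntegral.integral_congr fun u _ => ?_
          have harg : W' ω + u * η 0 ω / c = a + u * b := by rw [ha, hb]; ring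
          rw [harg, hb]
          field_simp
      _ = (f (a + 1 * b) - f (a + 0 * b)) * (c * η 0 ω) := by
          rw [intervalIntegral.integral_mul_const, hFTC0]
      _ = c * (η 0 ω * (f (W ω) - f (W' ω))) := by
          rw [hWeq ω, ← ha, ← hb]; ring_nf
  -- the product-space function
  set F : Ω → ℝ → ℝ := fun ω u => G (W' ω + u * η 0 ω / c) * η 0 ω ^ 2 with hF
  set ν := (volume.restrict (Set.Ioc (0:ℝ) 1)) with hν
  have hνfin : IsFiniteMeasure ν := by
    constructor
    rw [hν, Measure.restrict_apply_univ, Real.volume_Ioc]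
    simp
  have hνuniv : (ν Set.univ).toReal = 1 := by
    rw [hν, Measure.restrict_apply_univ, Real.volume_Ioc]
    simp
  have hFm : Measurable (Function.uncurry F) := by
    apply Measurable.mul
    · exact hGc.measurable.comp ((hW'm.comp measurable_fst).add
        ((measurable_snd.mul ((hmeas 0).comp measurable_fst)).div_const c))
    · exact ((hmeas 0).comp measurable_fst).pow_const 2
  have hFbound : ∀ ω u, |F ω u| ≤ C' * η 0 ω ^ 2 := by
    intro ω u
    rw [hF, abs_mul, abs_of_nonneg (sq_nonneg (η 0 ω))]
    exact mul_le_mul_of_nonneg_right (hC' _) (sq_nonneg _)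
  have hFint : Integrable (Function.uncurry F) (P.prod ν) := by
    refine (integrable_prod_iff hFm.aestronglyMeasurable).mpr ⟨?_, ?_⟩
    · refine Filter.Eventually.of_forall fun ω => ?_
      exact integrable_of_bdd ((hFm.comp (measurable_prodMk_left)).aestronglyMeasurable)
        (fun u => hFbound ω u)
    · have hmeasint : AEStronglyMeasurable (fun ω => ∫ u, ‖F ω u‖ ∂ν) P :=
        (hFm.norm.aestronglyMeasurable).integral_prod_right'
      refine (hsqint.const_mul C').mono' hmeasint (Filter.Eventually.of_forall fun ω => ?_)
      have h1 : ∫ u, ‖F ω u‖ ∂ν ≤ ∫ _u, C' * η 0 ω ^ 2 ∂ν := by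
        refine integral_mono ?_ (integrable_const _) ?_
        · exact integrable_of_bdd ((hFm.comp (measurable_prodMk_left)).norm.aestronglyMeasurable)
            (fun u => by simpa [abs_of_nonneg (norm_nonneg _)] using hFbound ω u)
        · intro u; simpa [Real.norm_eq_abs] using hFbound ω u
      have h2 : ∫ _u, C' * η 0 ω ^ 2 ∂ν = C' * η 0 ω ^ 2 := by
        rw [integral_const, measureReal_def, hνuniv, one_smul]
      have h3 : (0:ℝ) ≤ ∫ u, ‖F ω u‖ ∂ν :=
        integral_nonneg fun u => norm_nonneg _
      show ‖∫ u, ‖F ω u‖ ∂ν‖ ≤ C' * η 0 ω ^ 2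
      rw [Real.norm_eq_abs, abs_of_nonneg h3]
      linarith
  -- Fubini
  have hmain : (∫ u in (0:ℝ)..1, ∫ ω, F ω u ∂P) =
      c * ∫ ω, η 0 ω * (f (W ω) - f (W' ω)) ∂P := by
    rw [intervalIntegral.integral_of_le zero_le_one, ← hν, ← integral_integral_swap hFint]
    have h1 : ∫ ω, ∫ u, F ω u ∂ν ∂P = ∫ ω, c * (η 0 ω * (f (W ω) - f (W' ω))) ∂P := by
      refine integral_congr_ae (Filter.Eventually.of_forall fun ω => ?_)
      show (∫ u, F ω u ∂ν) = c * (η 0 ω * (f (W ω) - f (W' ω)))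
      rw [← hFTC ω, intervalIntegral.integral_of_le zero_le_one, hν]
    rw [h1, integral_const_mul]
  -- inner splitting
  have hdiffm : ∀ u : ℝ, Measurable fun ω => G (W' ω + u * η 0 ω / c) - G (W' ω) := by
    intro u
    exact (hGc.measurable.comp (hW'm.add (((hmeas 0).const_mul u).div_const c))).sub
      (hGc.measurable.comp hW'm)
  have hdiffint : ∀ u : ℝ, Integrable
      (fun ω => (G (W' ω + u * η 0 ω / c) - G (W' ω)) * η 0 ω ^ 2) P := by
    intro u
    refine Integrable.bdd_mul hsqint ((hdiffm u).aestronglyMeasurable) (Filter.Eventually.of_forall fun ω => ?_) (c := C' + C')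
    rw [Real.norm_eq_abs]
    calc |G (W' ω + u * η 0 ω / c) - G (W' ω)| ≤ |G (W' ω + u * η 0 ω / c)| + |G (W' ω)| :=
          abs_sub _ _
      _ ≤ C' + C' := add_le_add (hC' _) (hC' _)
  have hGW'sqint : Integrable (fun ω => G (W' ω) * η 0 ω ^ 2) P := by
    refine Integrable.bdd_mul hsqint ((hGc.measurable.comp hW'm).aestronglyMeasurable)
      (Filter.Eventually.of_forall fun ω => ?_) (c := C')
    rw [Real.norm_eq_abs]; exact hC' _
  have hsplit : ∀ u : ℝ, ∫ ω, F ω u ∂P =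
      (∫ ω, (G (W' ω + u * η 0 ω / c) - G (W' ω)) * η 0 ω ^ 2 ∂P) + ∫ ω, G (W' ω) ∂P := by
    intro u
    have h : ∀ ω, F ω u = (G (W' ω + u * η 0 ω / c) - G (W' ω)) * η 0 ω ^ 2 +
        G (W' ω) * η 0 ω ^ 2 := by
      intro ω; rw [hF]; ring
    rw [integral_congr_ae (Filter.Eventually.of_forall h),
      integral_add (hdiffint u) hGW'sqint, hEGsq]
  -- interval integrability of u ↦ ∫ F
  have hIntF : IntervalIntegrable (fun u => ∫ ω, F ω u ∂P) volume 0 1 := by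
    rw [intervalIntegrable_iff_integrableOn_Ioc_of_le zero_le_one]
    have := hFint.integral_prod_right
    exact this
  have hsplitInt : (∫ u in (0:ℝ)..1, ∫ ω, F ω u ∂P) =
      (∫ u in (0:ℝ)..1, ∫ ω, (G (W' ω + u * η 0 ω / c) - G (W' ω)) * η 0 ω ^ 2 ∂P) +
        ∫ ω, G (W' ω) ∂P := by
    have hdeq : (fun u => ∫ ω, (G (W' ω + u * η 0 ω / c) - G (W' ω)) * η 0 ω ^ 2 ∂P) =
        fun u => (∫ ω, F ω u ∂P) - ∫ ω, G (W' ω) ∂P := by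
      funext u; rw [hsplit u]; ring
    rw [hdeq, intervalIntegral.integral_sub hIntF intervalIntegrable_const,
      intervalIntegral.integral_const]
    simp
  -- assemble
  have hGWint : Integrable (fun ω => G (W ω)) P :=
    integrable_of_bdd (hGc.measurable.comp hWm).aestronglyMeasurable (fun ω => hC' _)
  have hGW2int : Integrable (fun ω => G (W' ω + η 0 ω / c)) P := by
    have h : (fun ω => G (W' ω + η 0 ω / c)) = fun ω => G (W ω) := by
      funext ω; rw [hWeq ω]
    rw [h]; exact hGWint
  have hstep : ∫ ω, W ω * f (W ω) ∂P =
      (∫ u in (0:ℝ)..1, ∫ ω, (G (W' ω + u * η 0 ω / c) - G (W' ω)) * η 0 ω ^ 2 ∂P) +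
        ∫ ω, G (W' ω) ∂P := by
    rw [hB1, ← hsplitInt, hmain]
    congr 1
    have hfW'ηint : Integrable (fun ω => η 0 ω * f (W' ω)) P :=
      integrable_mul_bdd hη0int ((hfc.measurable.comp hW'm).aestronglyMeasurable) (fun ω => hC _)
    have h : ∀ ω, η 0 ω * (f (W ω) - f (W' ω)) = η 0 ω * f (W ω) - η 0 ω * f (W' ω) :=
      fun ω => by ring
    rw [integral_congr_ae (Filter.Eventually.of_forall h),
      integral_sub (hfWη_int 0) hfW'ηint, hEfW'η, sub_zero]
  have hGeq : ∫ ω, G (W' ω + η 0 ω / c) ∂P = ∫ ω, G (W ω) ∂P :=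
    integral_congr_ae (Filter.Eventually.of_forall fun ω => by
      show G (W' ω + η 0 ω / c) = G (W ω)
      rw [hWeq ω])
  rw [integral_sub hGWint hWfWint, integral_sub hGW2int hGW'int, hstep, hGeq]
  ring
end
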